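/- arXiv:2405.07254 — 7 statements merged into one kernel-verified Lean document; each statement's English description precedes it below -/
import Mathlib

section
/- For every matrix X ∈ Mat(n,K), every k with 1 ≤ k ≤ n, and all upper unitriangular matrices u, v ∈ UT(n), one has D_k(uXv) = D_k(X); in other words, each left lower corner minor D_k is invariant under left and right multiplication by upper unitriangular matrices. -/
open Matrix

/-- Entry of an `n × n` matrix in 1-based indexing; `0` outside the range `[1,n]²`. -/
def ent {R : Type*} [Zero R] {n : ℕ} (X : Matrix (Fin n) (Fin n) R) (a b : ℕ) : R :=
  if h : 1 ≤ a ∧ a ≤ n ∧ 1 ≤ b ∧ b ≤ n then X ⟨a - 1, by omega⟩ ⟨b - 1, by omega⟩ else 0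

/-- `Dmin k X`: the left lower corner minor of order `n - k + 1`;
rows `k,…,n`, columns `1,…,n-k+1` (1-based). -/
noncomputable def Dmin {R : Type*} [CommRing R] {n : ℕ} (k : ℕ)
    (X : Matrix (Fin n) (Fin n) R) : R :=
  (Matrix.of fun r c : Fin (n + 1 - k) => ent X (k + r.val) (1 + c.val)).det

/-- `Mmin i j X`: minor of order `n - i + 1` with rows `i,…,n` and
columns `1,…,n-i` together with column `j` (1-based). -/
noncomputable def Mmin {R : Type*} [CommRing R] {n : ℕ} (i j : ℕ)
    (X : Matrix (Fin n) (Fin n) R) : R :=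
  (Matrix.of fun r c : Fin (n + 1 - i) =>
    ent X (i + r.val) (if c.val < n - i then 1 + c.val else j)).det

/-- `Nmin j k Y`: minor of order `n - k + 1` with rows `{j} ∪ {k+1,…,n}` and
columns `1,…,n-k+1` (1-based). -/
noncomputable def Nmin {R : Type*} [CommRing R] {n : ℕ} (j k : ℕ)
    (Y : Matrix (Fin n) (Fin n) R) : R :=
  (Matrix.of fun r c : Fin (n + 1 - k) =>
    ent Y (if r.val = 0 then j else k + r.val) (1 + c.val)).det

/-- `Pmin i k X Y = Σ_{j=i'}^{k} M_{ij}(X) N_{jk}(Y)`, where `i' = n - i + 1`. -/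
noncomputable def Pmin {R : Type*} [CommRing R] {n : ℕ} (i k : ℕ)
    (X Y : Matrix (Fin n) (Fin n) R) : R :=
  ∑ j ∈ Finset.Icc (n + 1 - i) k, Mmin i j X * Nmin j k Y

/-- `Rminus i k X Y`: determinant of the `k × k` matrix whose first `n - i + 1` rows are
rows `i,…,n` of `X` restricted to columns `1,…,k`, and whose remaining rows are the last
`k - (n - i + 1)` rows of `Y` restricted to columns `1,…,k`. -/
noncomputable def Rminus {R : Type*} [CommRing R] {n : ℕ} (i k : ℕ)
    (X Y : Matrix (Fin n) (Fin n) R) : R :=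
  (Matrix.of fun r c : Fin k =>
    if r.val < n + 1 - i then ent X (i + r.val) (1 + c.val)
    else ent Y (n - k + 1 + r.val) (1 + c.val)).det

/-- `Rplus i k Z X`: determinant of the `(n-i+1) × (n-i+1)` matrix whose first
`(n-i+1) - k` columns are columns `1,…,(n-i+1)-k` of `Z` restricted to rows `i,…,n`,
and whose last `k` columns are columns `1,…,k` of `X` restricted to rows `i,…,n`. -/
noncomputable def Rplus {R : Type*} [CommRing R] {n : ℕ} (i k : ℕ)
    (Z X : Matrix (Fin n) (Fin n) R) : R :=
  (Matrix.of fun r c : Fin (n + 1 - i) =>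
    if c.val < n + 1 - i - k then ent Z (i + r.val) (1 + c.val)
    else ent X (i + r.val) (c.val - (n + 1 - i - k) + 1)).det

/-- Square minor of order `m` with rows `r₀, r₀+1, …` and columns `c₀, c₀+1, …` (1-based). -/
noncomputable def RectMinor {R : Type*} [CommRing R] {n : ℕ} (r₀ c₀ m : ℕ)
    (X : Matrix (Fin n) (Fin n) R) : R :=
  (Matrix.of fun r c : Fin m => ent X (r₀ + r.val) (c₀ + c.val)).det

/-- `u` is upper triangular with ones on the diagonal. -/
def IsUT {R : Type*} [CommRing R] {n : ℕ} (u : Matrix (Fin n) (Fin n) R) : Prop :=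
  (∀ i, u i i = 1) ∧ ∀ i j : Fin n, (j : ℕ) < (i : ℕ) → u i j = 0

/-- Anti-diagonal matrix: entries off the anti-diagonal vanish (0-based: `a + b = n - 1`). -/
def AntiDiag {R : Type*} [Zero R] {n : ℕ} (X : Matrix (Fin n) (Fin n) R) : Prop :=
  ∀ a b : Fin n, (a : ℕ) + (b : ℕ) ≠ n - 1 → X a b = 0

/-- Lower anti-triangular: entries above the anti-diagonal vanish. -/
def LowerAnti {R : Type*} [Zero R] {n : ℕ} (X : Matrix (Fin n) (Fin n) R) : Prop :=
  ∀ a b : Fin n, (a : ℕ) + (b : ℕ) < n - 1 → X a b = 0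

/-- Upper anti-triangular: entries below the anti-diagonal vanish. -/
def UpperAnti {R : Type*} [Zero R] {n : ℕ} (X : Matrix (Fin n) (Fin n) R) : Prop :=
  ∀ a b : Fin n, n - 1 < (a : ℕ) + (b : ℕ) → X a b = 0

lemma sum_extend_aux {R : Type*} [AddCommMonoid R] {n m : ℕ} (e : Fin m → Fin n)
    (he : Function.Injective e) (f : Fin n → R)
    (h : ∀ q : Fin n, (∀ p : Fin m, e p ≠ q) → f q = 0) :
    ∑ q : Fin n, f q = ∑ q : Fin m, f (e q) :=
  calc ∑ q : Fin n, f q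
      = ∑ x ∈ Finset.univ.map ⟨e, he⟩, f x := by
        refine (Finset.sum_subset (Finset.subset_univ _) ?_).symm
        intro x _ hx
        refine h x fun p hp => hx ?_
        simp only [Finset.mem_map, Finset.mem_univ, Function.Embedding.coeFn_mk]
        exact ⟨p, trivial, hp⟩
    _ = ∑ q : Fin m, f (e q) := Finset.sum_map _ _ _

/-- each left lower corner minor `D_k` is invariant under left and right
multiplication by upper unitriangular matrices. -/
theorem Dmin_mul_unitriangular_left_right {K : Type*} [Field K] {n : ℕ} (hn : 1 ≤ n)
    (X u v : Matrix (Fin n) (Fin n) K) (hu : IsUT u) (hv : IsUT v)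
    (k : ℕ) (hk1 : 1 ≤ k) (hk2 : k ≤ n) :
    Dmin k (u * X * v) = Dmin k X := by
  classical
  set m := n + 1 - k with hmdef
  have hm : k - 1 + m = n := by omega
  have hmn : m ≤ n := by omega
  let er : Fin m → Fin n := fun r => ⟨k - 1 + r.val, by omega⟩
  let ec : Fin m → Fin n := fun c => ⟨c.val, by omega⟩
  have herv : ∀ r : Fin m, (er r : ℕ) = k - 1 + r.val := fun _ => rfl
  have hecv : ∀ c : Fin m, (ec c : ℕ) = c.val := fun _ => rfl
  have her : Function.Injective er := by
    intro a b hab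
    have h2 := congrArg Fin.val hab
    rw [herv, herv] at h2
    exact Fin.ext (by omega)
  have hec : Function.Injective ec := by
    intro a b hab
    have h2 := congrArg Fin.val hab
    rw [hecv, hecv] at h2
    exact Fin.ext h2
  have key : ∀ Y : Matrix (Fin n) (Fin n) K,
      Dmin k Y = (Y.submatrix er ec).det := by
    intro Y
    unfold Dmin
    congr 1
    ext r c
    have h1 : 1 ≤ k + r.val ∧ k + r.val ≤ n ∧ 1 ≤ 1 + c.val ∧ 1 + c.val ≤ n := by
      have := r.isLt; have := c.isLt; omega
    simp only [Matrix.of_apply, ent, dif_pos h1, Matrix.submatrix_apply]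
    congr 1
    · exact Fin.ext (by show k + r.val - 1 = k - 1 + r.val; omega)
    · exact Fin.ext (by show 1 + c.val - 1 = c.val; omega)
  have hsub : (u * X * v).submatrix er ec =
      (u.submatrix er er) * (X.submatrix er ec) * (v.submatrix ec ec) := by
    ext r c
    simp only [Matrix.submatrix_apply, Matrix.mul_apply]
    have hstep1 : ∑ q : Fin n, (∑ p : Fin n, u (er r) p * X p q) * v q (ec c)
        = ∑ q : Fin m, (∑ p : Fin n, u (er r) p * X p (ec q)) * v (ec q) (ec c) := by
      refine sum_extend_aux ec hec _ ?_
      intro q hq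
      have hqm : m ≤ q.val := by
        by_contra hlt
        push_neg at hlt
        exact hq ⟨q.val, hlt⟩ (Fin.ext rfl)
      have hz : v q (ec c) = 0 := by
        refine hv.2 q (ec c) ?_
        show (c : ℕ) < (q : ℕ)
        have := c.isLt; omega
      simp [hz]
    have hstep2 : ∀ q : Fin m, ∑ p : Fin n, u (er r) p * X p (ec q)
        = ∑ p : Fin m, u (er r) (er p) * X (er p) (ec q) := by
      intro q
      refine sum_extend_aux er her _ ?_
      intro p hp
      have hpk : p.val < k - 1 := by
        by_contra hge
        push_neg at hge
        refine hp ⟨p.val - (k - 1), by have := p.isLt; omega⟩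
          (Fin.ext (by show k - 1 + (p.val - (k - 1)) = p.val; omega))
      have hz : u (er r) p = 0 := by
        refine hu.2 (er r) p ?_
        show (p : ℕ) < k - 1 + (r : ℕ)
        omega
      simp [hz]
    rw [hstep1]
    exact Finset.sum_congr rfl fun q _ => by rw [hstep2 q]
  have hU : (u.submatrix er er).det = 1 := by
    rw [Matrix.det_of_upperTriangular]
    · simp only [Matrix.diag_apply, Matrix.submatrix_apply]
      rw [Finset.prod_congr rfl fun i _ => hu.1 (er i)]
      simp
    · intro i j hij
      refine hu.2 (er i) (er j) ?_
      show k - 1 + (j : ℕ) < k - 1 + (i : ℕ)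
      have hji : (j : ℕ) < (i : ℕ) := hij
      omega
  have hV : (v.submatrix ec ec).det = 1 := by
    rw [Matrix.det_of_upperTriangular]
    · simp only [Matrix.diag_apply, Matrix.submatrix_apply]
      rw [Finset.prod_congr rfl fun i _ => hv.1 (ec i)]
      simp
    · intro i j hij
      refine hv.2 (ec i) (ec j) ?_
      show (j : ℕ) < (i : ℕ)
      exact hij
  rw [key, key, hsub, Matrix.det_mul, Matrix.det_mul, hU, hV, one_mul, mul_one]
end

section
/- Let X ∈ Mat(n,K) satisfy D_k(X) ≠ 0 for all 1 ≤ k ≤ n. Then there exist matrices u₁, u₂ ∈ UT(n) such that u₁ X u₂⁻¹ is anti-diagonal, i.e. u₁ X u₂⁻¹ ∈ Λ(n). In particular, u₁X is lower anti-triangular and X u₂⁻¹ is upper anti-triangular. -/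
open Matrix

namespace ADAux

variable {K : Type*} [Field K]

lemma ent_eq {n : ℕ} (A : Matrix (Fin n) (Fin n) K) (a b : ℕ) (i j : Fin n)
    (ha : a = i.val + 1) (hb : b = j.val + 1) : ent A a b = A i j := by
  subst ha hb
  rw [ent, dif_pos (by omega)]
  congr 1 <;> · ext; simp

variable {K : Type*} [Field K]

def bdiag {n : ℕ} (a : K) (S : Matrix (Fin n) (Fin n) K) :
    Matrix (Fin (n + 1)) (Fin (n + 1)) K :=
  Matrix.of (Fin.cases (Fin.cons a 0) (fun i => Fin.cons 0 (S i)))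

@[simp] lemma bdiag_zz {n : ℕ} (a : K) (S : Matrix (Fin n) (Fin n) K) :
    bdiag a S 0 0 = a := by simp [bdiag]
@[simp] lemma bdiag_zs {n : ℕ} (a : K) (S : Matrix (Fin n) (Fin n) K) (j : Fin n) :
    bdiag a S 0 j.succ = 0 := by simp [bdiag]
@[simp] lemma bdiag_sz {n : ℕ} (a : K) (S : Matrix (Fin n) (Fin n) K) (i : Fin n) :
    bdiag a S i.succ 0 = 0 := by simp [bdiag]
@[simp] lemma bdiag_ss {n : ℕ} (a : K) (S : Matrix (Fin n) (Fin n) K) (i j : Fin n) :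
    bdiag a S i.succ j.succ = S i j := by simp [bdiag]

def elimL {n : ℕ} (M : Matrix (Fin (n + 1)) (Fin (n + 1)) K) :
    Matrix (Fin (n + 1)) (Fin (n + 1)) K :=
  Matrix.of fun i j => if i = j then 1 else if j = 0 then -(M i 0) / M 0 0 else 0

def elimR {n : ℕ} (M : Matrix (Fin (n + 1)) (Fin (n + 1)) K) :
    Matrix (Fin (n + 1)) (Fin (n + 1)) K :=
  Matrix.of fun i j => if i = j then 1 else if i = 0 then -(M 0 j) / M 0 0 else 0

def schur {n : ℕ} (M : Matrix (Fin (n + 1)) (Fin (n + 1)) K) :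
    Matrix (Fin n) (Fin n) K :=
  Matrix.of fun i j => M i.succ j.succ - M i.succ 0 * M 0 j.succ / M 0 0

lemma elimL_mul {n : ℕ} (M : Matrix (Fin (n + 1)) (Fin (n + 1)) K) :
    elimL M * M = Matrix.of (Fin.cases (fun j => M 0 j)
      (fun i' j => M i'.succ j - M i'.succ 0 / M 0 0 * M 0 j)) := by
  ext i j
  rw [Matrix.mul_apply]
  induction i using Fin.cases with
  | zero =>
      simp [elimL, Fin.sum_univ_succ, Fin.succ_ne_zero, (Fin.succ_ne_zero _).symm]
  | succ i' =>
      simp only [elimL, Matrix.of_apply, Fin.sum_univ_succ, Fin.cases_succ,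
        Fin.succ_ne_zero, if_false, if_true, Fin.succ_inj, ite_true]
      simp [Finset.sum_ite_eq, ite_mul]
      ring

lemma elim_mul_elim {n : ℕ} (M : Matrix (Fin (n + 1)) (Fin (n + 1)) K)
    (ha : M 0 0 ≠ 0) : elimL M * M * elimR M = bdiag (M 0 0) (schur M) := by
  rw [elimL_mul]
  ext i j
  rw [Matrix.mul_apply]
  induction i using Fin.cases with
  | zero =>
      induction j using Fin.cases with
      | zero =>
          simp [elimR, Fin.sum_univ_succ, Fin.succ_ne_zero, (Fin.succ_ne_zero _).symm]
      | succ j' =>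
          simp only [elimR, Matrix.of_apply, Fin.sum_univ_succ, Fin.cases_zero, bdiag_zs]
          simp [Fin.succ_ne_zero, (Fin.succ_ne_zero _).symm, Fin.succ_inj,
            Finset.sum_ite_eq, ite_mul, mul_ite]
          field_simp
          ring
  | succ i' =>
      induction j using Fin.cases with
      | zero =>
          simp only [elimR, Matrix.of_apply, Fin.sum_univ_succ, Fin.cases_succ, bdiag_sz]
          simp [Fin.succ_ne_zero, (Fin.succ_ne_zero _).symm, Fin.succ_inj,
            Finset.sum_ite_eq, ite_mul, mul_ite]
          field_simp
          ring
      | succ j' =>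
          simp only [elimR, Matrix.of_apply, Fin.sum_univ_succ, Fin.cases_succ, bdiag_ss, schur]
          simp [Fin.succ_ne_zero, (Fin.succ_ne_zero _).symm, Fin.succ_inj,
            Finset.sum_ite_eq, ite_mul, mul_ite]
          field_simp
          ring

lemma bdiag_mul {n : ℕ} (a b : K) (S T : Matrix (Fin n) (Fin n) K) :
    bdiag a S * bdiag b T = bdiag (a * b) (S * T) := by
  ext i j
  rw [Matrix.mul_apply]
  induction i using Fin.cases with
  | zero =>
      induction j using Fin.cases with
      | zero => simp [Fin.sum_univ_succ]
      | succ j' => simp [Fin.sum_univ_succ]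
  | succ i' =>
      induction j using Fin.cases with
      | zero => simp [Fin.sum_univ_succ]
      | succ j' => simp [Fin.sum_univ_succ, Matrix.mul_apply]

lemma det_bdiag {n : ℕ} (a : K) (S : Matrix (Fin n) (Fin n) K) :
    (bdiag a S).det = a * S.det := by
  have hsub : (bdiag a S).submatrix Fin.succ Fin.succ = S := by
    ext i j; simp
  rw [Matrix.det_succ_row_zero, Fin.sum_univ_succ]
  simp [hsub]

lemma det_elimL {n : ℕ} (M : Matrix (Fin (n + 1)) (Fin (n + 1)) K) :
    (elimL M).det = 1 := by
  rw [Matrix.det_of_lowerTriangular (elimL M) (fun i j hij => ?_)]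
  · exact Finset.prod_eq_one fun i _ => by simp [elimL]
  · have hij' : i < j := hij
    rw [elimL, Matrix.of_apply, if_neg (by rintro rfl; exact lt_irrefl _ hij'),
      if_neg (by rintro rfl; exact (Fin.not_lt_zero _ hij')), ]

lemma det_elimR {n : ℕ} (M : Matrix (Fin (n + 1)) (Fin (n + 1)) K) :
    (elimR M).det = 1 := by
  rw [Matrix.det_of_upperTriangular (M := elimR M) (fun i j hij => ?_)]
  · exact Finset.prod_eq_one fun i _ => by simp [elimR]
  · have hij' : j < i := hij
    rw [elimR, Matrix.of_apply, if_neg (by rintro rfl; exact lt_irrefl _ hij'),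
      if_neg (by rintro rfl; exact (Fin.not_lt_zero _ hij'))]

lemma det_schur {n : ℕ} (M : Matrix (Fin (n + 1)) (Fin (n + 1)) K)
    (ha : M 0 0 ≠ 0) : M.det = M 0 0 * (schur M).det := by
  have h := congrArg Matrix.det (elim_mul_elim M ha)
  rwa [Matrix.det_mul, Matrix.det_mul, det_elimL, det_elimR, one_mul, mul_one,
    det_bdiag] at h


lemma rectMinor_castLE {n m : ℕ} (hm : m ≤ n) (A : Matrix (Fin n) (Fin n) K) :
    RectMinor 1 1 m A = (A.submatrix (Fin.castLE hm) (Fin.castLE hm)).det := by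
  unfold RectMinor
  congr 1
  ext r c
  exact ent_eq A _ _ (Fin.castLE hm r) (Fin.castLE hm c) (by simp [Fin.castLE]; omega)
    (by simp [Fin.castLE]; omega)

lemma schur_submatrix {n m : ℕ} (h : m ≤ n) (M : Matrix (Fin (n + 1)) (Fin (n + 1)) K) :
    schur (M.submatrix (Fin.castLE (by omega : m + 1 ≤ n + 1))
        (Fin.castLE (by omega : m + 1 ≤ n + 1))) =
      (schur M).submatrix (Fin.castLE h) (Fin.castLE h) := by
  have hs : ∀ i : Fin m, Fin.castLE (by omega : m + 1 ≤ n + 1) i.succ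
      = (Fin.castLE h i).succ := fun i => by ext; simp
  have h0 : Fin.castLE (by omega : m + 1 ≤ n + 1) (0 : Fin (m + 1)) = 0 := rfl
  ext i j
  simp [schur, hs, h0]

lemma lowerTri_mul {n : ℕ} {M N : Matrix (Fin n) (Fin n) K}
    (hM1 : ∀ i, M i i = 1) (hM : ∀ i j : Fin n, (i : ℕ) < j → M i j = 0)
    (hN1 : ∀ i, N i i = 1) (hN : ∀ i j : Fin n, (i : ℕ) < j → N i j = 0) :
    (∀ i, (M * N) i i = 1) ∧ (∀ i j : Fin n, (i : ℕ) < j → (M * N) i j = 0) := by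
  constructor
  · intro i
    rw [Matrix.mul_apply, Finset.sum_eq_single i]
    · rw [hM1, hN1, one_mul]
    · intro k _ hk
      rcases lt_trichotomy (k : ℕ) (i : ℕ) with h' | h' | h'
      · rw [hN k i h', mul_zero]
      · exact absurd (Fin.ext h') hk
      · rw [hM i k h', zero_mul]
    · intro h'; exact absurd (Finset.mem_univ i) h'
  · intro i j hij
    rw [Matrix.mul_apply]
    apply Finset.sum_eq_zero
    intro k _
    rcases Nat.lt_or_ge (i : ℕ) (k : ℕ) with h' | h'
    · rw [hM i k h', zero_mul]
    · rw [hN k j (lt_of_le_of_lt h' hij), mul_zero]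

lemma upperTri_mul {n : ℕ} {M N : Matrix (Fin n) (Fin n) K}
    (hM1 : ∀ i, M i i = 1) (hM : ∀ i j : Fin n, (j : ℕ) < i → M i j = 0)
    (hN1 : ∀ i, N i i = 1) (hN : ∀ i j : Fin n, (j : ℕ) < i → N i j = 0) :
    (∀ i, (M * N) i i = 1) ∧ (∀ i j : Fin n, (j : ℕ) < i → (M * N) i j = 0) := by
  constructor
  · intro i
    rw [Matrix.mul_apply, Finset.sum_eq_single i]
    · rw [hM1, hN1, one_mul]
    · intro k _ hk
      rcases lt_trichotomy (k : ℕ) (i : ℕ) with h' | h' | h'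
      · rw [hM i k h', zero_mul]
      · exact absurd (Fin.ext h') hk
      · rw [hN k i h', mul_zero]
    · intro h'; exact absurd (Finset.mem_univ i) h'
  · intro i j hij
    rw [Matrix.mul_apply]
    apply Finset.sum_eq_zero
    intro k _
    rcases Nat.lt_or_ge (k : ℕ) (i : ℕ) with h' | h'
    · rw [hM i k h', zero_mul]
    · rw [hN k j (lt_of_lt_of_le hij h'), mul_zero]

lemma ldu : ∀ (p : ℕ) (A : Matrix (Fin p) (Fin p) K),
    (∀ m, 1 ≤ m → m ≤ p → RectMinor 1 1 m A ≠ 0) →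
    ∃ L U : Matrix (Fin p) (Fin p) K,
      (∀ i, L i i = 1) ∧ (∀ i j : Fin p, (i : ℕ) < j → L i j = 0) ∧
      (∀ i, U i i = 1) ∧ (∀ i j : Fin p, (j : ℕ) < i → U i j = 0) ∧
      (∀ i j : Fin p, i ≠ j → (L * A * U) i j = 0) := by
  intro p
  induction p with
  | zero =>
      intro A _
      exact ⟨1, 1, fun i => i.elim0, fun i => i.elim0, fun i => i.elim0,
        fun i => i.elim0, fun i => i.elim0⟩
  | succ q ih =>
      intro A h
      have ha : A 0 0 ≠ 0 := by
        have h1 := h 1 le_rfl (by omega)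
        have e : RectMinor 1 1 1 A = A 0 0 := by
          unfold RectMinor
          rw [Matrix.det_fin_one]
          exact ent_eq A (1 + (0 : Fin 1).val) (1 + (0 : Fin 1).val) 0 0 (by simp) (by simp)
        rwa [e] at h1
      have hS : ∀ m, 1 ≤ m → m ≤ q → RectMinor 1 1 m (schur A) ≠ 0 := by
        intro m h1m hmq
        have hm1 : m + 1 ≤ q + 1 := by omega
        have key : RectMinor 1 1 (m + 1) A = A 0 0 * RectMinor 1 1 m (schur A) := by
          rw [rectMinor_castLE hm1, rectMinor_castLE hmq]
          have hT0 : (A.submatrix (Fin.castLE hm1) (Fin.castLE hm1)) 0 0 = A 0 0 := rfl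
          rw [det_schur _ (by rw [hT0]; exact ha), hT0, schur_submatrix hmq]
        intro h0
        exact h (m + 1) (by omega) (by omega) (by rw [key, h0, mul_zero])
      obtain ⟨L₁, U₁, hL₁d, hL₁u, hU₁d, hU₁l, hD⟩ := ih (schur A) hS
      -- triangularity of the four factors
      have hbL : (∀ i, bdiag (1 : K) L₁ i i = 1) ∧
          (∀ i j : Fin (q + 1), (i : ℕ) < j → bdiag (1 : K) L₁ i j = 0) := by
        constructor
        · intro i
          induction i using Fin.cases with
          | zero => simp
          | succ i' => simp [hL₁d]
        · intro i j hij
          induction i using Fin.cases with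
          | zero =>
              induction j using Fin.cases with
              | zero => simp at hij
              | succ j' => simp
          | succ i' =>
              induction j using Fin.cases with
              | zero => simp at hij
              | succ j' =>
                  simp only [bdiag_ss]
                  exact hL₁u i' j' (by simpa using hij)
      have heL : (∀ i, elimL A i i = 1) ∧
          (∀ i j : Fin (q + 1), (i : ℕ) < j → elimL A i j = 0) := by
        refine ⟨fun i => by simp [elimL], fun i j hij => ?_⟩
        rw [elimL, Matrix.of_apply, if_neg (show ¬i = j by rintro rfl; exact lt_irrefl _ hij),
          if_neg (show ¬j = 0 by rintro rfl; simp at hij)]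
      have hbU : (∀ i, bdiag (1 : K) U₁ i i = 1) ∧
          (∀ i j : Fin (q + 1), (j : ℕ) < i → bdiag (1 : K) U₁ i j = 0) := by
        constructor
        · intro i
          induction i using Fin.cases with
          | zero => simp
          | succ i' => simp [hU₁d]
        · intro i j hij
          induction i using Fin.cases with
          | zero => simp at hij
          | succ i' =>
              induction j using Fin.cases with
              | zero => simp
              | succ j' =>
                  simp only [bdiag_ss]
                  exact hU₁l i' j' (by simpa using hij)
      have heU : (∀ i, elimR A i i = 1) ∧
          (∀ i j : Fin (q + 1), (j : ℕ) < i → elimR A i j = 0) := by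
        refine ⟨fun i => by simp [elimR], fun i j hij => ?_⟩
        rw [elimR, Matrix.of_apply, if_neg (show ¬i = j by rintro rfl; exact lt_irrefl _ hij),
          if_neg (show ¬i = 0 by rintro rfl; simp at hij)]
      obtain ⟨hLd, hLu⟩ := lowerTri_mul hbL.1 hbL.2 heL.1 heL.2
      obtain ⟨hUd, hUl⟩ := upperTri_mul heU.1 heU.2 hbU.1 hbU.2
      refine ⟨bdiag 1 L₁ * elimL A, elimR A * bdiag 1 U₁, hLd, hLu, hUd, hUl, ?_⟩
      have hprod : bdiag 1 L₁ * elimL A * A * (elimR A * bdiag 1 U₁)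
          = bdiag (A 0 0) (L₁ * schur A * U₁) := by
        calc bdiag 1 L₁ * elimL A * A * (elimR A * bdiag 1 U₁)
            = bdiag 1 L₁ * (elimL A * A * elimR A) * bdiag 1 U₁ := by
              simp only [Matrix.mul_assoc]
          _ = bdiag 1 L₁ * bdiag (A 0 0) (schur A) * bdiag 1 U₁ := by
              rw [elim_mul_elim A ha]
          _ = bdiag (A 0 0) (L₁ * schur A * U₁) := by
              rw [bdiag_mul, bdiag_mul, one_mul, mul_one]
      rw [hprod]
      intro i j hij
      induction i using Fin.cases with
      | zero =>
          induction j using Fin.cases with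
          | zero => exact absurd rfl hij
          | succ j' => simp
      | succ i' =>
          induction j using Fin.cases with
          | zero => simp
          | succ j' =>
              simp only [bdiag_ss]
              exact hD i' j' (fun hh => hij (by rw [hh]))

lemma ut_inv {n : ℕ} (U : Matrix (Fin n) (Fin n) K) (h1 : ∀ i, U i i = 1)
    (h2 : ∀ i j : Fin n, (j : ℕ) < i → U i j = 0) :
    IsUnit U.det ∧ (∀ i, U⁻¹ i i = 1) ∧ (∀ i j : Fin n, (j : ℕ) < i → U⁻¹ i j = 0) := by
  have hbt : U.BlockTriangular (id : Fin n → Fin n) := by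
    intro i j hij
    exact h2 i j hij
  have hdet : U.det = 1 := by
    rw [Matrix.det_of_upperTriangular hbt]
    exact Finset.prod_eq_one fun i _ => h1 i
  have hu : IsUnit U.det := by rw [hdet]; exact isUnit_one
  haveI := U.invertibleOfIsUnitDet hu
  have hinv : U⁻¹.BlockTriangular (id : Fin n → Fin n) :=
    Matrix.blockTriangular_inv_of_blockTriangular hbt
  have h2' : ∀ i j : Fin n, (j : ℕ) < i → U⁻¹ i j = 0 := fun i j hij =>
    hinv (show (id j : Fin n) < id i from hij)
  refine ⟨hu, fun i => ?_, h2'⟩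
  have hone := congrFun (congrFun (Matrix.nonsing_inv_mul U hu) i) i
  rw [Matrix.mul_apply, Finset.sum_eq_single i] at hone
  · rw [Matrix.one_apply_eq] at hone
    rwa [h1 i, mul_one] at hone
  · intro k _ hk
    rcases lt_trichotomy (k : ℕ) (i : ℕ) with h' | h' | h'
    · rw [h2' i k h', zero_mul]
    · exact absurd (Fin.ext h') hk
    · rw [h2 k i h', mul_zero]
  · intro h'; exact absurd (Finset.mem_univ i) h'

lemma dmin_cast {n : ℕ} (X : Matrix (Fin n) (Fin n) K) (k m : ℕ) (h : n + 1 - k = m) :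
    Dmin k X = (Matrix.of fun r c : Fin m => ent X (k + r.val) (1 + c.val)).det := by
  subst h; rfl

end ADAux

/-- if all the corner minors `D_k(X)` are nonzero, then `X` can be brought to
anti-diagonal form by unitriangular matrices: `u₁ * X * u₂⁻¹ ∈ Λ(n)`; in particular
`u₁ * X` is lower anti-triangular and `X * u₂⁻¹` is upper anti-triangular. -/
theorem exists_unitriangular_antidiagonal {K : Type*} [Field K] {n : ℕ} (hn : 1 ≤ n)
    (X : Matrix (Fin n) (Fin n) K) (hX : ∀ k : ℕ, 1 ≤ k → k ≤ n → Dmin k X ≠ 0) :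
    ∃ u₁ u₂ : Matrix (Fin n) (Fin n) K, IsUT u₁ ∧ IsUT u₂ ∧
      AntiDiag (u₁ * X * u₂⁻¹) ∧ LowerAnti (u₁ * X) ∧ UpperAnti (X * u₂⁻¹) := by
  classical
  set A : Matrix (Fin n) (Fin n) K := X.submatrix Fin.rev id with hAdef
  have hA : ∀ m, 1 ≤ m → m ≤ n → RectMinor 1 1 m A ≠ 0 := by
    intro m h1m hmn
    have hDk := hX (n + 1 - m) (by omega) (by omega)
    have hmeq : n + 1 - (n + 1 - m) = m := by omega
    rw [ADAux.dmin_cast X (n + 1 - m) m hmeq] at hDk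
    have hRM : RectMinor 1 1 m A =
        ((Matrix.of fun r c : Fin m =>
            ent X ((n + 1 - m) + r.val) (1 + c.val)).submatrix
          (Fin.revPerm : Equiv.Perm (Fin m)) id).det := by
      rw [ADAux.rectMinor_castLE hmn]
      congr 1
      ext r c
      have hr := r.2
      have hc := c.2
      simp only [Matrix.submatrix_apply, id_eq, hAdef, Matrix.of_apply, Fin.revPerm_apply]
      exact (ADAux.ent_eq X _ _ (Fin.rev (Fin.castLE hmn r)) (Fin.castLE hmn c)
        (by simp [Fin.val_rev, Fin.castLE]; omega) (by simp [Fin.castLE]; omega)).symm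
    rw [hRM, Matrix.det_permute]
    rcases Int.units_eq_one_or (Equiv.Perm.sign (Fin.revPerm : Equiv.Perm (Fin m))) with hs | hs <;>
      simp [hs, hDk]
  obtain ⟨L, U, hLd, hLu, hUd, hUl, hDiag⟩ := ADAux.ldu n A hA
  obtain ⟨hUdet, hUinvd, hUinvl⟩ := ADAux.ut_inv U hUd hUl
  set u₁ : Matrix (Fin n) (Fin n) K := L.submatrix Fin.rev Fin.rev with hu₁def
  have hu₁UT : IsUT u₁ := by
    constructor
    · intro i; exact hLd _
    · intro i j hji
      apply hLu
      have hi := i.2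
      have hj := j.2
      simp only [Fin.val_rev]
      omega
  obtain ⟨hu1det, hu1invd, hu1invl⟩ := ADAux.ut_inv u₁ hu₁UT.1 hu₁UT.2
  have key : u₁ * X = (L * A).submatrix Fin.rev id := by
    ext i j
    rw [Matrix.mul_apply, Matrix.submatrix_apply, id_eq, Matrix.mul_apply]
    apply Fintype.sum_equiv (Fin.revPerm : Equiv.Perm (Fin n))
    intro k
    simp [hu₁def, hAdef, Fin.rev_rev]
  have key2 : u₁ * X * U = (L * A * U).submatrix Fin.rev id := by
    rw [key]
    ext i j
    simp [Matrix.mul_apply]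
  have hu2inv : (U⁻¹)⁻¹ = U := Matrix.nonsing_inv_nonsing_inv U hUdet
  refine ⟨u₁, U⁻¹, hu₁UT, ⟨hUinvd, hUinvl⟩, ?_, ?_, ?_⟩
  · intro a b hab
    rw [hu2inv, key2, Matrix.submatrix_apply, id_eq]
    apply hDiag
    intro hEq
    apply hab
    have hv := congrArg Fin.val hEq
    rw [Fin.val_rev] at hv
    have ha2 := a.2
    omega
  · intro a b hab
    have hXU : u₁ * X = (L * A * U).submatrix Fin.rev id * U⁻¹ := by
      rw [← key2, Matrix.mul_assoc, Matrix.mul_nonsing_inv U hUdet, Matrix.mul_one]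
    rw [hXU, Matrix.mul_apply]
    apply Finset.sum_eq_zero
    intro k _
    rw [Matrix.submatrix_apply, id_eq]
    by_cases hk : Fin.rev a = k
    · rw [← hk, hUinvl (Fin.rev a) b (by rw [Fin.val_rev]; have := a.2; omega), mul_zero]
    · rw [hDiag _ _ hk, zero_mul]
  · intro a b hab
    rw [hu2inv]
    have hXU2 : X * U = u₁⁻¹ * ((L * A * U).submatrix Fin.rev id) := by
      calc X * U = u₁⁻¹ * (u₁ * X * U) := by
            rw [← Matrix.mul_assoc, ← Matrix.mul_assoc, Matrix.nonsing_inv_mul u₁ hu1det,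
              Matrix.one_mul]
        _ = u₁⁻¹ * ((L * A * U).submatrix Fin.rev id) := by rw [key2]
    rw [hXU2, Matrix.mul_apply]
    apply Finset.sum_eq_zero
    intro k _
    rw [Matrix.submatrix_apply, id_eq]
    by_cases hk : k = Fin.rev b
    · subst hk
      rw [hu1invl a (Fin.rev b) (by rw [Fin.val_rev]; have := b.2; omega), zero_mul]
    · rw [hDiag _ _ (fun hEq => hk (by rw [← hEq, Fin.rev_rev])), mul_zero]
end

section
/- Let h = (X_α)_{α∈A} be a point of H = Π_{α∈A} Mat(n,K) such that D_k(X_α) ≠ 0 for every arrow α ∈ A and every 1 ≤ k ≤ n. Then there exists g = (g_v)_{v∈V} ∈ U_Q = Π_{v∈V} UT(n) such that for every arrow α one has g_{t(α)} X_α g_{s(α)}⁻¹ ∈ S_α, i.e. g.h lies in the section S = Π_{α∈A} S_α. -/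
open Matrix

/-- Membership in the piece `S_α` of the section, for an arrow `α` of the quiver with
source/target maps `s, t` and a choice map `ψ` assigning to each vertex an incident arrow:
if `α` is a loop, `S_α = S⁻(n)` when `α = ψ(q)` and `S_α = Mat(n)` otherwise; if `α` is not
a loop, `S_α = S⁻(n)` if `α = ψ(t α) ≠ ψ(s α)`, `S_α = S⁺(n)` if `α = ψ(s α) ≠ ψ(t α)`,
`S_α = Λ(n)` if `α = ψ(s α) = ψ(t α)`, and `S_α = Mat(n)` if `α ∉ Im ψ`. -/
def SMem {K : Type*} [Field K] {n : ℕ} {V A : Type*} (s t : A → V) (ψ : V → A) (α : A)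
    (M : Matrix (Fin n) (Fin n) K) : Prop :=
  (s α = t α → (α = ψ (s α) → LowerAnti M)) ∧
  (s α ≠ t α →
    ((α = ψ (t α) ∧ α ≠ ψ (s α)) → LowerAnti M) ∧
    ((α = ψ (s α) ∧ α ≠ ψ (t α)) → UpperAnti M) ∧
    ((α = ψ (s α) ∧ α = ψ (t α)) → AntiDiag M))

section Helpers

variable {K : Type*} [Field K] {n : ℕ}

lemma IsUT.one : IsUT (1 : Matrix (Fin n) (Fin n) K) :=
  ⟨fun i => by simp, fun i j hij => by
    rw [Matrix.one_apply_ne (by exact fun h => by simp [h] at hij)]⟩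

lemma IsUT.blockTriangular {u : Matrix (Fin n) (Fin n) K} (hu : IsUT u) :
    u.BlockTriangular id := fun i j hij => hu.2 i j hij

lemma IsUT.mul {u v : Matrix (Fin n) (Fin n) K} (hu : IsUT u) (hv : IsUT v) :
    IsUT (u * v) := by
  constructor
  · intro i
    rw [Matrix.mul_apply, Finset.sum_eq_single i]
    · rw [hu.1, hv.1, one_mul]
    · intro c _ hc
      rcases lt_or_ge (c : ℕ) (i : ℕ) with h | h
      · rw [hu.2 i c h, zero_mul]
      · rw [hv.2 c i (lt_of_le_of_ne h (fun he => hc (Fin.ext he.symm))), mul_zero]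
    · simp
  · intro i j hij
    rw [Matrix.mul_apply]
    apply Finset.sum_eq_zero
    intro c _
    rcases lt_or_ge (c : ℕ) (i : ℕ) with h | h
    · rw [hu.2 i c h, zero_mul]
    · rw [hv.2 c j (lt_of_lt_of_le hij h), mul_zero]

lemma IsUT.det_eq_one {u : Matrix (Fin n) (Fin n) K} (hu : IsUT u) : u.det = 1 := by
  rw [Matrix.det_of_upperTriangular hu.blockTriangular]
  simp [hu.1]

lemma IsUT.isUnit_det {u : Matrix (Fin n) (Fin n) K} (hu : IsUT u) : IsUnit u.det := by
  rw [hu.det_eq_one]; exact isUnit_one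

lemma IsUT.inv {u : Matrix (Fin n) (Fin n) K} (hu : IsUT u) : IsUT u⁻¹ := by
  have hdet : IsUnit u.det := hu.isUnit_det
  haveI := u.invertibleOfIsUnitDet hdet
  have hbt : u⁻¹.BlockTriangular id :=
    Matrix.blockTriangular_inv_of_blockTriangular hu.blockTriangular
  refine ⟨?_, fun i j hij => hbt hij⟩
  intro i
  have h1 : (u * u⁻¹) i i = 1 := by rw [Matrix.mul_nonsing_inv u hdet]; simp
  rw [Matrix.mul_apply, Finset.sum_eq_single i] at h1
  · rwa [hu.1, one_mul] at h1
  · intro c _ hc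
    rcases lt_or_ge (c : ℕ) (i : ℕ) with h | h
    · rw [hu.2 i c h, zero_mul]
    · rw [hbt (show (i:ℕ) < (c:ℕ) from lt_of_le_of_ne h (fun he => hc (Fin.ext he.symm))),
        mul_zero]
  · simp

lemma ent_eq {X : Matrix (Fin n) (Fin n) K} {a b : ℕ} (i j : Fin n)
    (ha : a = (i : ℕ) + 1) (hb : b = (j : ℕ) + 1) : ent X a b = X i j := by
  subst ha hb
  have h : 1 ≤ (i:ℕ)+1 ∧ (i:ℕ)+1 ≤ n ∧ 1 ≤ (j:ℕ)+1 ∧ (j:ℕ)+1 ≤ n :=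
    ⟨by omega, by omega, by omega, by omega⟩
  rw [ent, dif_pos h]
  congr 1

lemma lowerAnti_of_antiDiag_mul {Λ u : Matrix (Fin n) (Fin n) K}
    (hΛ : AntiDiag Λ) (hu : IsUT u) : LowerAnti (Λ * u) := by
  intro a b hab
  rw [Matrix.mul_apply]
  apply Finset.sum_eq_zero
  intro c _
  rcases eq_or_ne ((a:ℕ) + (c:ℕ)) (n-1) with h | h
  · rw [hu.2 c b (by omega), mul_zero]
  · rw [hΛ a c h, zero_mul]

lemma upperAnti_of_mul_antiDiag {Λ u : Matrix (Fin n) (Fin n) K}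
    (hu : IsUT u) (hΛ : AntiDiag Λ) : UpperAnti (u * Λ) := by
  intro a b hab
  rw [Matrix.mul_apply]
  apply Finset.sum_eq_zero
  intro c _
  rcases eq_or_ne ((c:ℕ) + (b:ℕ)) (n-1) with h | h
  · rw [hu.2 a c (by omega), zero_mul]
  · rw [hΛ c b h, mul_zero]

lemma antiDiag_entry_ne_zero {s : ℕ} {B : Matrix (Fin s) (Fin s) K}
    (hB : ∀ r c : Fin s, (r:ℕ)+(c:ℕ) ≠ s - 1 → B r c = 0) (h : B.det ≠ 0) :
    ∀ r c : Fin s, (r:ℕ)+(c:ℕ) = s - 1 → B r c ≠ 0 := by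
  have hC : (B.submatrix (Fin.revPerm : Equiv.Perm (Fin s)) id).det ≠ 0 := by
    rw [Matrix.det_permute]
    intro hc
    rcases mul_eq_zero.mp hc with hc | hc
    · rcases Int.units_eq_one_or
        (Equiv.Perm.sign (Fin.revPerm : Equiv.Perm (Fin s))) with hs | hs <;>
        rw [hs] at hc <;> simp at hc
    · exact h hc
  set C := B.submatrix (Fin.revPerm : Equiv.Perm (Fin s)) id with hCdef
  have hCtri : C.BlockTriangular id := by
    intro i j hij
    have hij' : (j : ℕ) < (i : ℕ) := hij
    have hi := i.is_lt
    show B (Fin.revPerm i) j = 0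
    apply hB
    simp only [Fin.revPerm_apply, Fin.val_rev]
    omega
  rw [Matrix.det_of_upperTriangular hCtri] at hC
  have hdiag : ∀ r : Fin s, C r r ≠ 0 := by
    intro r hr
    exact hC (Finset.prod_eq_zero (Finset.mem_univ r) hr)
  intro r c hrc
  have := hdiag c
  have hrev : (Fin.revPerm : Equiv.Perm (Fin s)) c = r := by
    apply Fin.ext; simp [Fin.val_rev]; omega
  rwa [hCdef, Matrix.submatrix_apply, hrev, id] at this

lemma Dmin_mul_left {u X : Matrix (Fin n) (Fin n) K} (hu : IsUT u) {k : ℕ}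
    (hk1 : 1 ≤ k) (hk2 : k ≤ n) : Dmin k (u * X) = Dmin k X := by
  set m := n + 1 - k with hm
  have hkm : ∀ r : Fin m, k - 1 + (r:ℕ) < n := fun r => by have := r.is_lt; omega
  set e : Fin m → Fin n := fun r => ⟨k - 1 + (r:ℕ), hkm r⟩ with he
  have hinj : Function.Injective e := by
    intro a b hab
    have : k - 1 + (a:ℕ) = k - 1 + (b:ℕ) := congrArg Fin.val hab
    exact Fin.ext (by omega)
  set U' : Matrix (Fin m) (Fin m) K := Matrix.of (fun r r' => u (e r) (e r')) with hU'
  have hUtri : U'.BlockTriangular id := by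
    intro r r' hrr'
    exact hu.2 (e r) (e r') (by simp only [he]; exact Nat.add_lt_add_left hrr' _)
  have hUdet : U'.det = 1 := by
    rw [Matrix.det_of_upperTriangular hUtri]
    exact Finset.prod_eq_one fun r _ => hu.1 (e r)
  have key : (Matrix.of fun r c : Fin m => ent (u * X) (k + r.val) (1 + c.val))
      = U' * (Matrix.of fun r c : Fin m => ent X (k + r.val) (1 + c.val)) := by
    ext r c
    have hc : (c:ℕ) < n := by have := c.is_lt; omega
    rw [Matrix.of_apply, ent_eq (e r) ⟨(c:ℕ), hc⟩ (by simp [he]; omega) (by simp; omega)]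
    rw [Matrix.mul_apply, Matrix.mul_apply]
    have hterm : ∀ c' : Fin n, c' ∉ Finset.univ.image e → u (e r) c' * X c' ⟨(c:ℕ), hc⟩ = 0 := by
      intro c' hc'
      have hlt : (c':ℕ) < k - 1 := by
        by_contra hge
        push_neg at hge
        have hc'2 : (c':ℕ) - (k-1) < m := by have := c'.is_lt; omega
        exact hc' (Finset.mem_image.mpr ⟨⟨(c':ℕ) - (k-1), hc'2⟩, Finset.mem_univ _,
          Fin.ext (by simp [he]; omega)⟩)
      rw [hu.2 (e r) c' (by simp [he]; omega), zero_mul]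
    rw [← Finset.sum_subset (Finset.subset_univ (Finset.univ.image e))
      (fun x _ hx => hterm x hx)]
    rw [Finset.sum_image (fun a _ b _ hab => hinj hab)]
    apply Finset.sum_congr rfl
    intro r' _
    rw [Matrix.of_apply, ent_eq (e r') ⟨(c:ℕ), hc⟩ (by simp [he]; omega) (by simp; omega)]
    rfl
  unfold Dmin
  rw [key, Matrix.det_mul, hUdet, one_mul]

lemma Dmin_mul_right {X w : Matrix (Fin n) (Fin n) K} (hw : IsUT w) {k : ℕ}
    (hk1 : 1 ≤ k) (hk2 : k ≤ n) : Dmin k (X * w) = Dmin k X := by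
  set m := n + 1 - k with hm
  have hkm : ∀ c : Fin m, (c:ℕ) < n := fun c => by have := c.is_lt; omega
  set e : Fin m → Fin n := fun c => ⟨(c:ℕ), hkm c⟩ with he
  have hinj : Function.Injective e := by
    intro a b hab
    have := congrArg Fin.val hab
    simp only [he] at this
    exact Fin.ext this
  set W' : Matrix (Fin m) (Fin m) K := Matrix.of (fun c c' => w (e c) (e c')) with hW'
  have hWtri : W'.BlockTriangular id := fun c c' hcc' => hw.2 (e c) (e c') hcc'
  have hWdet : W'.det = 1 := by
    rw [Matrix.det_of_upperTriangular hWtri]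
    exact Finset.prod_eq_one fun c _ => hw.1 (e c)
  have key : (Matrix.of fun r c : Fin m => ent (X * w) (k + r.val) (1 + c.val))
      = (Matrix.of fun r c : Fin m => ent X (k + r.val) (1 + c.val)) * W' := by
    ext r c
    have hr : k - 1 + (r:ℕ) < n := by have := r.is_lt; omega
    rw [Matrix.of_apply, ent_eq ⟨k - 1 + (r:ℕ), hr⟩ (e c) (by simp; omega) (by simp [he]; omega)]
    rw [Matrix.mul_apply, Matrix.mul_apply]
    have hterm : ∀ c' : Fin n, c' ∉ Finset.univ.image e →
        X ⟨k - 1 + (r:ℕ), hr⟩ c' * w c' (e c) = 0 := by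
      intro c' hc'
      have hge : m ≤ (c':ℕ) := by
        by_contra hlt
        push_neg at hlt
        exact hc' (Finset.mem_image.mpr ⟨⟨(c':ℕ), hlt⟩, Finset.mem_univ _, Fin.ext rfl⟩)
      rw [hw.2 c' (e c) (by simp [he]; have := c.is_lt; omega), mul_zero]
    rw [← Finset.sum_subset (Finset.subset_univ (Finset.univ.image e))
      (fun x _ hx => hterm x hx)]
    rw [Finset.sum_image (fun a _ b _ hab => hinj hab)]
    apply Finset.sum_congr rfl
    intro c' _
    rw [Matrix.of_apply, ent_eq ⟨k - 1 + (r:ℕ), hr⟩ (e c') (by simp; omega) (by simp [he]; omega)]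
    rfl
  unfold Dmin
  rw [key, Matrix.det_mul, hWdet, mul_one]

lemma addCol_mul (v : Fin n → K) (p : Fin n) (X : Matrix (Fin n) (Fin n) K) (i j : Fin n) :
    ((1 + Matrix.vecMulVec v (Pi.single p 1)) * X) i j = X i j + v i * X p j := by
  rw [Matrix.add_mul, Matrix.one_mul, Matrix.add_apply, Matrix.mul_apply]
  congr 1
  rw [Finset.sum_eq_single p]
  · rw [Matrix.vecMulVec_apply, Pi.single_eq_same, mul_one]
  · intro c _ hc
    rw [Matrix.vecMulVec_apply, Pi.single_eq_of_ne hc, mul_zero, zero_mul]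
  · simp

lemma mul_addRow (f : Fin n → K) (q : Fin n) (X : Matrix (Fin n) (Fin n) K) (i j : Fin n) :
    (X * (1 + Matrix.vecMulVec (Pi.single q 1) f)) i j = X i j + X i q * f j := by
  rw [Matrix.mul_add, Matrix.mul_one, Matrix.add_apply, Matrix.mul_apply]
  congr 1
  rw [Finset.sum_eq_single q]
  · rw [Matrix.vecMulVec_apply, Pi.single_eq_same, one_mul]
  · intro c _ hc
    rw [Matrix.vecMulVec_apply, Pi.single_eq_of_ne hc, zero_mul, mul_zero]
  · simp

lemma isUT_addCol (v : Fin n → K) (p : Fin n) (hv : ∀ i : Fin n, ¬ ((i:ℕ) < (p:ℕ)) → v i = 0) :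
    IsUT (1 + Matrix.vecMulVec v (Pi.single p 1)) := by
  constructor
  · intro i
    rw [Matrix.add_apply, Matrix.one_apply_eq, Matrix.vecMulVec_apply]
    rcases eq_or_ne i p with h | h
    · rw [hv i (by omega), zero_mul, add_zero]
    · rw [Pi.single_eq_of_ne h, mul_zero, add_zero]
  · intro i j hij
    rw [Matrix.add_apply, Matrix.one_apply_ne (fun h => by simp [h] at hij),
      Matrix.vecMulVec_apply]
    rcases eq_or_ne j p with h | h
    · subst h
      rw [hv i (by omega), zero_mul, add_zero]
    · rw [Pi.single_eq_of_ne h, mul_zero, add_zero]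

lemma isUT_addRow (f : Fin n → K) (q : Fin n) (hf : ∀ j : Fin n, ¬ ((q:ℕ) < (j:ℕ)) → f j = 0) :
    IsUT (1 + Matrix.vecMulVec (Pi.single q 1) f) := by
  constructor
  · intro i
    rw [Matrix.add_apply, Matrix.one_apply_eq, Matrix.vecMulVec_apply]
    rcases eq_or_ne i q with h | h
    · rw [hf i (by omega), mul_zero, add_zero]
    · rw [Pi.single_eq_of_ne h, zero_mul, add_zero]
  · intro i j hij
    rw [Matrix.add_apply, Matrix.one_apply_ne (fun h => by simp [h] at hij),
      Matrix.vecMulVec_apply]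
    rcases eq_or_ne i q with h | h
    · subst h
      rw [hf j (by omega), mul_zero, add_zero]
    · rw [Pi.single_eq_of_ne h, zero_mul, add_zero]

lemma reduce (hn : 1 ≤ n) :
    ∀ (d : ℕ) (X : Matrix (Fin n) (Fin n) K),
      (∀ k, 1 ≤ k → k ≤ n → Dmin k X ≠ 0) →
      (∀ i j : Fin n, (n ≤ (i:ℕ) + (n - d) ∨ (j:ℕ) < n - d) → (i:ℕ)+(j:ℕ) ≠ n-1 → X i j = 0) →
      ∃ u w : Matrix (Fin n) (Fin n) K, IsUT u ∧ IsUT w ∧ AntiDiag (u * X * w) := by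
  intro d
  induction d with
  | zero =>
    intro X _ hinv
    refine ⟨1, 1, IsUT.one, IsUT.one, ?_⟩
    rw [Matrix.one_mul, Matrix.mul_one]
    intro a b hab
    exact hinv a b (Or.inl (by omega)) hab
  | succ d ih =>
    intro X hreg hinv
    by_cases hdn : d < n
    · -- main step
      set m := n - d - 1 with hm
      have hmn : m < n := by omega
      set p : Fin n := ⟨d, hdn⟩ with hp
      set q : Fin n := ⟨m, hmn⟩ with hq
      have hpval : (p:ℕ) = d := rfl
      have hqval : (q:ℕ) = m := rfl
      -- the pivot is nonzero
      have hDa : (Matrix.of fun r c : Fin (n + 1 - (d+1)) =>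
          ent X ((d+1) + r.val) (1 + c.val)).det ≠ 0 := hreg (d+1) (by omega) (by omega)
      have hB0 : ∀ r c : Fin (n + 1 - (d+1)), (r:ℕ)+(c:ℕ) ≠ (n + 1 - (d+1)) - 1 →
          (Matrix.of fun r c : Fin (n + 1 - (d+1)) =>
            ent X ((d+1) + r.val) (1 + c.val)) r c = 0 := by
        intro r c hrc
        have hr := r.is_lt
        have hc := c.is_lt
        rw [Matrix.of_apply, ent_eq ⟨d + (r:ℕ), by omega⟩ ⟨(c:ℕ), by omega⟩
          (by simp; omega) (by simp; omega)]
        rcases Nat.eq_zero_or_pos (r:ℕ) with h0 | h0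
        · exact hinv ⟨d + (r:ℕ), by omega⟩ ⟨(c:ℕ), by omega⟩ (Or.inr (by simp; omega))
            (by simp; omega)
        · exact hinv ⟨d + (r:ℕ), by omega⟩ ⟨(c:ℕ), by omega⟩ (Or.inl (by simp; omega))
            (by simp; omega)
      have ha : X p q ≠ 0 := by
        have hkey := antiDiag_entry_ne_zero hB0 hDa ⟨0, by omega⟩ ⟨m, by omega⟩ (by simp only []; omega)
        rwa [Matrix.of_apply, ent_eq p q (by simp [hpval]) (by simp [hqval]; omega)] at hkey
      set a := X p q with hadef
      set v : Fin n → K := fun i => if (i:ℕ) < d then -(X i q) / a else 0 with hv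
      set u1 := 1 + Matrix.vecMulVec v (Pi.single p 1) with hu1
      have hu1UT : IsUT u1 := isUT_addCol v p (fun i hi => if_neg (by omega))
      set X' := u1 * X with hX'def
      have hX'e : ∀ i j, X' i j = X i j + v i * X p j := fun i j => addCol_mul v p X i j
      have hvp : v p = 0 := if_neg (by simp; omega)
      set f : Fin n → K := fun j => if m < (j:ℕ) then -(X p j) / a else 0 with hf
      set w1 := 1 + Matrix.vecMulVec (Pi.single q 1) f with hw1
      have hw1UT : IsUT w1 := isUT_addRow f q (fun j hj => if_neg (by omega))
      set X'' := X' * w1 with hX''def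
      have hX''e : ∀ i j, X'' i j = X' i j + X' i q * f j := fun i j => mul_addRow f q X' i j
      have hfq : f q = 0 := if_neg (by simp; omega)
      have hXpj : ∀ j : Fin n, (j:ℕ) < m → X p j = 0 := fun j hj =>
        hinv p j (Or.inr (by omega)) (by omega)
      have hreg'' : ∀ k, 1 ≤ k → k ≤ n → Dmin k X'' ≠ 0 := by
        intro k h1 h2
        rw [hX''def, Dmin_mul_right hw1UT h1 h2, hX'def, Dmin_mul_left hu1UT h1 h2]
        exact hreg k h1 h2
      have hinv'' : ∀ i j : Fin n, (n ≤ (i:ℕ) + (n - d) ∨ (j:ℕ) < n - d) →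
          (i:ℕ)+(j:ℕ) ≠ n-1 → X'' i j = 0 := by
        intro i j hd hne
        rw [hX''e i j, hX'e i j, hX'e i q]
        rcases lt_trichotomy (i:ℕ) d with hi | hi | hi
        · have hjm : (j:ℕ) ≤ m := by rcases hd with hcase | hcase <;> omega
          rcases eq_or_lt_of_le hjm with hjm' | hjm'
          · have hjq : j = q := Fin.ext (by omega)
            rw [hjq, hfq, mul_zero, add_zero]
            have hvi : v i = -(X i q) / a := if_pos hi
            rw [hvi, ← hadef, div_mul_cancel₀ _ ha, add_neg_cancel]
          · have h1 : X i j = 0 := hinv i j (Or.inr (by omega)) hne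
            have h2 : X p j = 0 := hXpj j hjm'
            have h3 : f j = 0 := if_neg (by omega)
            rw [h1, h2, h3, mul_zero, mul_zero, add_zero, add_zero]
        · have hip : i = p := Fin.ext (by omega)
          rw [hip, hvp, zero_mul, add_zero, zero_mul, add_zero, ← hadef]
          have hjm : (j:ℕ) ≠ m := by omega
          rcases lt_or_gt_of_ne hjm with hj | hj
          · rw [hXpj j hj, hf]
            simp only [if_neg (by omega : ¬ m < (j:ℕ))]
            rw [mul_zero, add_zero]
          · have hfj : f j = -(X p j) / a := if_pos hj
            rw [hfj, mul_comm, div_mul_cancel₀ _ ha, add_neg_cancel]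
        · have h1 : X i j = 0 := hinv i j (Or.inl (by omega)) hne
          have h2 : X i q = 0 := hinv i q (Or.inl (by omega)) (by omega)
          have h3 : v i = 0 := if_neg (by omega)
          rw [h1, h2, h3]
          ring
        -- note: hd is used only via omega above
      obtain ⟨u', w', hu', hw', hAnti⟩ := ih X'' hreg'' hinv''
      refine ⟨u' * u1, w1 * w', hu'.mul hu1UT, hw1UT.mul hw', ?_⟩
      have hre : u' * u1 * X * (w1 * w') = u' * X'' * w' := by
        rw [hX''def, hX'def]
        simp only [Matrix.mul_assoc]
      rw [hre]
      exact hAnti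
    · -- degenerate: d ≥ n, both invariants are vacuous
      refine ih X hreg ?_
      intro i j hd hne
      have hi := i.is_lt
      have hj := j.is_lt
      exact absurd hd (by omega)

end Helpers

/-- if all corner minors `D_k(X_α)` of all components of a point
`h = (X_α)_{α∈A}` of `H = Π_α Mat(n,K)` are nonzero, then there is
`g = (g_v) ∈ U_Q = Π_v UT(n)` with `g_{t(α)} X_α g_{s(α)}⁻¹ ∈ S_α` for every arrow `α`,
i.e. `g.h` lies in the section `S = Π_α S_α`. -/
theorem exists_unitriangular_moving_into_section {K : Type*} [Field K] {n : ℕ} (hn : 1 ≤ n)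
    {V A : Type*} [Fintype V] [Fintype A] (s t : A → V) (ψ : V → A)
    (hψ : ∀ v : V, s (ψ v) = v ∨ t (ψ v) = v)
    (h : A → Matrix (Fin n) (Fin n) K)
    (hreg : ∀ (α : A) (k : ℕ), 1 ≤ k → k ≤ n → Dmin k (h α) ≠ 0) :
    ∃ g : V → Matrix (Fin n) (Fin n) K, (∀ v, IsUT (g v)) ∧
      ∀ α : A, SMem s t ψ α (g (t α) * h α * (g (s α))⁻¹) := by
  classical
  have hmain : ∀ α : A, ∃ uw : Matrix (Fin n) (Fin n) K × Matrix (Fin n) (Fin n) K,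
      IsUT uw.1 ∧ IsUT uw.2 ∧ AntiDiag (uw.1 * h α * uw.2) := by
    intro α
    obtain ⟨u, w, h1, h2, h3⟩ := reduce hn n (h α) (hreg α)
      (fun i j hd _ => absurd hd (by have := i.is_lt; have := j.is_lt; omega))
    exact ⟨(u, w), h1, h2, h3⟩
  choose uw hUT hWT hΛ using hmain
  set u : A → Matrix (Fin n) (Fin n) K := fun α => (uw α).1 with hu
  set w : A → Matrix (Fin n) (Fin n) K := fun α => (uw α).2 with hw
  set g : V → Matrix (Fin n) (Fin n) K :=
    fun v => if t (ψ v) = v then u (ψ v) else (w (ψ v))⁻¹ with hg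
  have hgUT : ∀ v : V, IsUT (g v) := by
    intro v
    rw [hg]
    dsimp only
    split
    · exact hUT _
    · exact (hWT _).inv
  refine ⟨g, hgUT, ?_⟩
  intro α
  -- basic algebraic facts for the arrow α
  have hUdet : IsUnit (u α).det := (hUT α).isUnit_det
  have hWdet : IsUnit (w α).det := (hWT α).isUnit_det
  have hUX : u α * h α = (u α * h α * w α) * (w α)⁻¹ := by
    rw [Matrix.mul_assoc, Matrix.mul_nonsing_inv _ hWdet, Matrix.mul_one]
  have hXW : h α * w α = (u α)⁻¹ * (u α * h α * w α) := by
    rw [← Matrix.mul_assoc, ← Matrix.mul_assoc, Matrix.nonsing_inv_mul _ hUdet, Matrix.one_mul]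
  have hgt_eq : α = ψ (t α) → g (t α) = u α := by
    intro hψt
    rw [hg]
    dsimp only
    rw [← hψt, if_pos rfl]
  constructor
  · -- loop case
    intro hloop hψs
    have hψt : α = ψ (t α) := by rw [← hloop]; exact hψs
    have hgs : g (s α) = u α := by rw [hloop]; exact hgt_eq hψt
    rw [hgt_eq hψt, hgs]
    have hM : u α * h α * (u α)⁻¹ = (u α * h α * w α) * ((w α)⁻¹ * (u α)⁻¹) := by
      rw [← Matrix.mul_assoc, ← hUX]
    rw [hM]
    exact lowerAnti_of_antiDiag_mul (hΛ α) ((hWT α).inv.mul (hUT α).inv)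
  · intro hne
    refine ⟨?_, ?_, ?_⟩
    · -- α = ψ (t α), α ≠ ψ (s α) : S⁻
      rintro ⟨hψt, -⟩
      rw [hgt_eq hψt]
      have hM : u α * h α * (g (s α))⁻¹ = (u α * h α * w α) * ((w α)⁻¹ * (g (s α))⁻¹) := by
        rw [← Matrix.mul_assoc, ← hUX]
      rw [hM]
      exact lowerAnti_of_antiDiag_mul (hΛ α) ((hWT α).inv.mul (hgUT (s α)).inv)
    · -- α = ψ (s α), α ≠ ψ (t α) : S⁺
      rintro ⟨hψs, -⟩
      have hgs : g (s α) = (w α)⁻¹ := by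
        rw [hg]
        dsimp only
        rw [← hψs, if_neg (fun hc => hne hc.symm)]
      rw [hgs, Matrix.nonsing_inv_nonsing_inv _ hWdet]
      have hM : g (t α) * h α * w α = (g (t α) * (u α)⁻¹) * (u α * h α * w α) := by
        rw [Matrix.mul_assoc (g (t α)), hXW, ← Matrix.mul_assoc]
      rw [hM]
      exact upperAnti_of_mul_antiDiag ((hgUT (t α)).mul (hUT α).inv) (hΛ α)
    · -- α = ψ (s α) = ψ (t α) : Λ
      rintro ⟨hψs, hψt⟩
      have hgs : g (s α) = (w α)⁻¹ := by
        rw [hg]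
        dsimp only
        rw [← hψs, if_neg (fun hc => hne hc.symm)]
      rw [hgt_eq hψt, hgs, Matrix.nonsing_inv_nonsing_inv _ hWdet]
      exact hΛ α
end

section
/- Assume K is infinite. Let f be a polynomial function on H = Π_{α∈A} Mat(n,K) that is invariant under the action of U_Q, i.e. f(g.h) = f(h) for all g ∈ U_Q and h ∈ H. If f vanishes identically on the section S = Π_{α∈A} S_α, then f = 0. Equivalently, the restriction map π : K[H]^{U_Q} → K[S] is injective. -/
open Matrix

namespace QSec

variable {F : Type*} [CommRing F] {n : ℕ}

theorem lowerAnti_mul {M w : Matrix (Fin n) (Fin n) F} (hM : LowerAnti M)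
    (hw : ∀ i j : Fin n, (j : ℕ) < (i : ℕ) → w i j = 0) : LowerAnti (M * w) := by
  intro a b hab
  rw [Matrix.mul_apply]
  refine Finset.sum_eq_zero fun c _ => ?_
  by_cases hc : (c : ℕ) ≤ (b : ℕ)
  · rw [hM a c (by omega), zero_mul]
  · rw [hw c b (by omega), mul_zero]

theorem mul_upperAnti {M g : Matrix (Fin n) (Fin n) F} (hM : UpperAnti M)
    (hg : ∀ i j : Fin n, (j : ℕ) < (i : ℕ) → g i j = 0) : UpperAnti (g * M) := by
  intro a b hab
  rw [Matrix.mul_apply]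
  refine Finset.sum_eq_zero fun c _ => ?_
  by_cases hc : (c : ℕ) < (a : ℕ)
  · rw [hg a c hc, zero_mul]
  · rw [hM c b (by omega), mul_zero]

theorem isUT_det {u : Matrix (Fin n) (Fin n) F} (h : IsUT u) : u.det = 1 := by
  rw [Matrix.det_of_upperTriangular (fun i j (hij : j < i) => h.2 i j hij)]
  simp [h.1]

theorem isUT_inv {u : Matrix (Fin n) (Fin n) F} (h : IsUT u) : IsUT u⁻¹ := by
  have hdet : IsUnit u.det := by rw [isUT_det h]; exact isUnit_one
  haveI := u.invertibleOfIsUnitDet hdet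
  have htri : Matrix.BlockTriangular u⁻¹ id :=
    Matrix.blockTriangular_inv_of_blockTriangular (fun i j (hij : j < i) => h.2 i j hij)
  constructor
  · intro i
    have key : (u⁻¹ * u) i i = u⁻¹ i i := by
      rw [Matrix.mul_apply, Finset.sum_eq_single i]
      · rw [h.1 i, mul_one]
      · intro j _ hj
        by_cases hji : (j : ℕ) < (i : ℕ)
        · rw [htri (show (id j : Fin n) < id i from hji), zero_mul]
        · have : (i : ℕ) < (j : ℕ) := by
            rcases Nat.lt_or_ge (i : ℕ) (j : ℕ) with hh | hh
            · exact hh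
            · exact absurd (Fin.ext (by omega)) hj
          rw [h.2 j i this, mul_zero]
      · intro hi; exact absurd (Finset.mem_univ i) hi
    rw [Matrix.nonsing_inv_mul u hdet, Matrix.one_apply_eq] at key
    exact key.symm
  · intro i j hij
    exact htri (show (id j : Fin n) < id i from hij)

theorem isUT_inv_eq_adjugate {u : Matrix (Fin n) (Fin n) F} (h : IsUT u) :
    u⁻¹ = u.adjugate := by
  rw [Matrix.inv_def, isUT_det h, Ring.inverse_one, one_smul]

end QSec

namespace QSec

variable {F : Type*} [CommRing F] {n : ℕ}

/-- Coefficient matrix of the linear system for row `a` of the left normalizer. -/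
def Bm (X : Matrix (Fin n) (Fin n) F) (a : Fin n) : Matrix (Fin n) (Fin n) F :=
  Matrix.of fun j q =>
    if a < j ∧ (q : ℕ) < n - 1 - (a : ℕ) then X j q
    else if (j : ℕ) ≤ (a : ℕ) ∧ (q : ℕ) = n - 1 - (a : ℕ) + (j : ℕ) then 1 else 0

/-- Right-hand side of the linear system for row `a` of the left normalizer. -/
def wv (X : Matrix (Fin n) (Fin n) F) (a : Fin n) : Fin n → F := fun q =>
  if (q : ℕ) < n - 1 - (a : ℕ) then -X a q else if (q : ℕ) = n - 1 then 1 else 0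

/-- Left normalizer: a unitriangular `u` with `u * X` lower anti-triangular. -/
noncomputable def uL (X : Matrix (Fin n) (Fin n) F) : Matrix (Fin n) (Fin n) F :=
  Matrix.of fun a => (wv X a) ᵥ* (Bm X a)⁻¹

theorem uL_row (X : Matrix (Fin n) (Fin n) F) (a : Fin n) (hB : IsUnit (Bm X a).det) :
    (uL X a) ᵥ* (Bm X a) = wv X a := by
  show ((wv X a) ᵥ* (Bm X a)⁻¹) ᵥ* (Bm X a) = wv X a
  rw [Matrix.vecMul_vecMul, Matrix.nonsing_inv_mul _ hB, Matrix.vecMul_one]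

theorem uL_low (X : Matrix (Fin n) (Fin n) F) (a j : Fin n) (hB : IsUnit (Bm X a).det)
    (hj : (j : ℕ) ≤ (a : ℕ)) : uL X a j = if j = a then 1 else 0 := by
  have ha := a.isLt
  have hjn := j.isLt
  have hq : n - 1 - (a : ℕ) + (j : ℕ) < n := by omega
  have h1 := congrFun (uL_row X a hB) ⟨n - 1 - (a : ℕ) + (j : ℕ), hq⟩
  simp only [Matrix.vecMul, dotProduct] at h1
  have hBcol : ∀ jj : Fin n,
      Bm X a jj ⟨n - 1 - (a : ℕ) + (j : ℕ), hq⟩ = if jj = j then 1 else 0 := by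
    intro jj
    show (if a < jj ∧ (n - 1 - (a : ℕ) + (j : ℕ)) < n - 1 - (a : ℕ) then X jj _
      else if (jj : ℕ) ≤ (a : ℕ) ∧ (n - 1 - (a : ℕ) + (j : ℕ)) = n - 1 - (a : ℕ) + (jj : ℕ)
        then 1 else 0) = _
    rw [if_neg (fun hh => by omega)]
    by_cases hjj : jj = j
    · subst hjj; rw [if_pos ⟨hj, rfl⟩, if_pos rfl]
    · rw [if_neg, if_neg hjj]
      rintro ⟨-, h2⟩
      exact hjj (Fin.ext (by omega))
  rw [Finset.sum_congr rfl (fun jj _ => by rw [hBcol jj])] at h1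
  simp only [mul_ite, mul_one, mul_zero] at h1
  rw [Finset.sum_ite_eq' Finset.univ j (fun jj => uL X a jj), if_pos (Finset.mem_univ j)] at h1
  rw [h1]
  show (if (n - 1 - (a : ℕ) + (j : ℕ)) < n - 1 - (a : ℕ) then -X a _
    else if (n - 1 - (a : ℕ) + (j : ℕ)) = n - 1 then 1 else 0) = _
  rw [if_neg (by omega)]
  by_cases hja : j = a
  · subst hja; rw [if_pos (by omega), if_pos rfl]
  · rw [if_neg (fun hc => hja (Fin.ext (by omega))), if_neg hja]

theorem uL_isUT (X : Matrix (Fin n) (Fin n) F) (hB : ∀ a, IsUnit (Bm X a).det) :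
    IsUT (uL X) := by
  constructor
  · intro i; rw [uL_low X i i (hB i) le_rfl, if_pos rfl]
  · intro i j hij
    rw [uL_low X i j (hB i) (by omega), if_neg (by rintro rfl; omega)]

theorem uL_lowerAnti (X : Matrix (Fin n) (Fin n) F) (hB : ∀ a, IsUnit (Bm X a).det) :
    LowerAnti (uL X * X) := by
  intro a q hlt
  have ha := a.isLt
  have hqn := q.isLt
  have h1 := congrFun (uL_row X a (hB a)) q
  simp only [Matrix.vecMul, dotProduct] at h1
  have hw : wv X a q = -X a q := by
    show (if _ then _ else _) = _
    rw [if_pos (by omega)]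
  rw [Matrix.mul_apply]
  have split : ∀ jj : Fin n,
      uL X a jj * X jj q = uL X a jj * Bm X a jj q + (if jj = a then X a q else 0) := by
    intro jj
    rcases Nat.lt_trichotomy (jj : ℕ) (a : ℕ) with h | h | h
    · rw [uL_low X a jj (hB a) (by omega), if_neg (by rintro rfl; omega),
        if_neg (by rintro rfl; omega), zero_mul, zero_mul, zero_add]
    · have hje : jj = a := Fin.ext h
      subst hje
      have hBm0 : Bm X jj jj q = 0 := by
        show (if jj < jj ∧ _ then _ else if _ ∧ (q : ℕ) = _ then _ else _) = _
        rw [if_neg (fun hh => lt_irrefl _ hh.1), if_neg (fun hh => by omega)]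
      rw [hBm0, mul_zero, zero_add, if_pos rfl, uL_low X jj jj (hB jj) le_rfl, if_pos rfl,
        one_mul]
    · have hBmX : Bm X a jj q = X jj q := by
        show (if _ then _ else _) = _
        rw [if_pos ⟨Fin.lt_def.mpr h, by omega⟩]
      rw [hBmX, if_neg (by rintro rfl; omega), add_zero]
  rw [Finset.sum_congr rfl (fun jj _ => split jj), Finset.sum_add_distrib, h1, hw,
    Finset.sum_ite_eq' Finset.univ a (fun _ => X a q), if_pos (Finset.mem_univ a)]
  ring

end QSec

namespace QSec

variable {F : Type*} [CommRing F] {n : ℕ}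

/-- Coefficient matrix of the linear system for column `b` of the right normalizer. -/
def Dm (X : Matrix (Fin n) (Fin n) F) (b : Fin n) : Matrix (Fin n) (Fin n) F :=
  Matrix.of fun q i =>
    if n - (b : ℕ) ≤ (q : ℕ) ∧ (i : ℕ) < (b : ℕ) then X q i
    else if (q : ℕ) < n - (b : ℕ) ∧ (i : ℕ) = (q : ℕ) + (b : ℕ) then 1 else 0

/-- Right-hand side of the linear system for column `b` of the right normalizer. -/
def wc (X : Matrix (Fin n) (Fin n) F) (b : Fin n) : Fin n → F := fun q =>
  if n - (b : ℕ) ≤ (q : ℕ) then -X q b else if (q : ℕ) = 0 then 1 else 0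

/-- Right normalizer: a unitriangular `r` with `X * r` upper anti-triangular. -/
noncomputable def rR (X : Matrix (Fin n) (Fin n) F) : Matrix (Fin n) (Fin n) F :=
  Matrix.of fun i b => ((Dm X b)⁻¹ *ᵥ (wc X b)) i

theorem rR_col (X : Matrix (Fin n) (Fin n) F) (b : Fin n) (hD : IsUnit (Dm X b).det) :
    (Dm X b) *ᵥ (fun i => rR X i b) = wc X b := by
  show (Dm X b) *ᵥ (fun i => ((Dm X b)⁻¹ *ᵥ (wc X b)) i) = wc X b
  rw [show (fun i => ((Dm X b)⁻¹ *ᵥ (wc X b)) i) = (Dm X b)⁻¹ *ᵥ (wc X b) from rfl,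
    Matrix.mulVec_mulVec, Matrix.mul_nonsing_inv _ hD, Matrix.one_mulVec]

theorem rR_low (X : Matrix (Fin n) (Fin n) F) (b i : Fin n) (hD : IsUnit (Dm X b).det)
    (hi : (b : ℕ) ≤ (i : ℕ)) : rR X i b = if i = b then 1 else 0 := by
  have hb := b.isLt
  have hin := i.isLt
  have hq : (i : ℕ) - (b : ℕ) < n := by omega
  have h1 := congrFun (rR_col X b hD) ⟨(i : ℕ) - (b : ℕ), hq⟩
  simp only [Matrix.mulVec, dotProduct] at h1
  have hrow : ∀ ii : Fin n,
      Dm X b ⟨(i : ℕ) - (b : ℕ), hq⟩ ii = if ii = i then 1 else 0 := by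
    intro ii
    show (if n - (b : ℕ) ≤ (i : ℕ) - (b : ℕ) ∧ (ii : ℕ) < (b : ℕ) then X _ ii
      else if (i : ℕ) - (b : ℕ) < n - (b : ℕ) ∧ (ii : ℕ) = (i : ℕ) - (b : ℕ) + (b : ℕ)
        then 1 else 0) = _
    rw [if_neg (fun hh => by omega)]
    by_cases hie : ii = i
    · subst hie; rw [if_pos ⟨by omega, by omega⟩, if_pos rfl]
    · rw [if_neg, if_neg hie]
      rintro ⟨-, h2⟩
      exact hie (Fin.ext (by omega))
  rw [Finset.sum_congr rfl (fun ii _ => by rw [hrow ii])] at h1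
  simp only [ite_mul, one_mul, zero_mul] at h1
  rw [Finset.sum_ite_eq' Finset.univ i (fun ii => rR X ii b), if_pos (Finset.mem_univ i)] at h1
  rw [show rR X i b = ((Dm X b)⁻¹ *ᵥ (wc X b)) i from rfl] at h1 ⊢
  rw [h1]
  show (if n - (b : ℕ) ≤ (i : ℕ) - (b : ℕ) then -X _ b
    else if (i : ℕ) - (b : ℕ) = 0 then 1 else 0) = _
  rw [if_neg (by omega)]
  by_cases hib : i = b
  · subst hib; rw [if_pos (by omega), if_pos rfl]
  · rw [if_neg (fun hc => hib (Fin.ext (by omega))), if_neg hib]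

theorem rR_isUT (X : Matrix (Fin n) (Fin n) F) (hD : ∀ b, IsUnit (Dm X b).det) :
    IsUT (rR X) := by
  constructor
  · intro i; rw [rR_low X i i (hD i) le_rfl, if_pos rfl]
  · intro i j hij
    rw [rR_low X j i (hD j) (by omega), if_neg (by rintro rfl; omega)]

theorem rR_upperAnti (X : Matrix (Fin n) (Fin n) F) (hD : ∀ b, IsUnit (Dm X b).det) :
    UpperAnti (X * rR X) := by
  intro q b hgt
  have hb := b.isLt
  have hqn := q.isLt
  have h1 := congrFun (rR_col X b (hD b)) q
  simp only [Matrix.mulVec, dotProduct] at h1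
  have hw : wc X b q = -X q b := by
    show (if _ then _ else _) = _
    rw [if_pos (by omega)]
  rw [Matrix.mul_apply]
  have split : ∀ i : Fin n,
      X q i * rR X i b = Dm X b q i * rR X i b + (if i = b then X q b else 0) := by
    intro i
    rcases Nat.lt_trichotomy (i : ℕ) (b : ℕ) with h | h | h
    · have hDX : Dm X b q i = X q i := by
        show (if _ then _ else _) = _
        rw [if_pos ⟨by omega, h⟩]
      rw [hDX, if_neg (by rintro rfl; omega), add_zero]
    · have hie : i = b := Fin.ext h
      subst hie
      have hD0 : Dm X i q i = 0 := by
        show (if _ ∧ (i : ℕ) < (i : ℕ) then _ else if (q : ℕ) < n - (i : ℕ) ∧ _ then _ else _) = _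
        rw [if_neg (fun hh => by omega), if_neg (fun hh => by omega)]
      rw [hD0, zero_mul, zero_add, if_pos rfl, rR_low X i i (hD i) le_rfl, if_pos rfl, mul_one]
    · rw [rR_low X b i (hD b) (by omega), if_neg (by rintro rfl; omega), mul_zero, mul_zero,
        if_neg (by rintro rfl; omega), add_zero]
  rw [Finset.sum_congr rfl (fun i _ => split i), Finset.sum_add_distrib, h1, hw,
    Finset.sum_ite_eq' Finset.univ b (fun _ => X q b), if_pos (Finset.mem_univ b)]
  ring

end QSec

namespace QSec

variable {n : ℕ}

theorem Bm_map {R S : Type*} [CommRing R] [CommRing S] (φ : R →+* S)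
    (X : Matrix (Fin n) (Fin n) R) (a : Fin n) :
    (Bm X a).map φ = Bm (X.map φ) a := by
  ext j q
  simp only [Matrix.map_apply, Bm, Matrix.of_apply, apply_ite φ, _root_.map_one φ, map_zero]

theorem Dm_map {R S : Type*} [CommRing R] [CommRing S] (φ : R →+* S)
    (X : Matrix (Fin n) (Fin n) R) (b : Fin n) :
    (Dm X b).map φ = Dm (X.map φ) b := by
  ext q i
  simp only [Matrix.map_apply, Dm, Matrix.of_apply, apply_ite φ, _root_.map_one φ, map_zero]

theorem permMatrix_entry {K : Type*} [CommRing K] (σ : Equiv.Perm (Fin n)) (i q : Fin n) :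
    Equiv.Perm.permMatrix K σ i q = if σ i = q then 1 else 0 := by
  simp only [Equiv.Perm.permMatrix, PEquiv.toMatrix_apply, Equiv.toPEquiv_apply,
    Option.mem_def, Option.some.injEq]

theorem Bm_pattern_det {K : Type*} [Field K] [NeZero n] (a : Fin n)
    (Y : Matrix (Fin n) (Fin n) K)
    (hY : ∀ j q : Fin n, Y j q = if (q : ℕ) = ((j : ℕ) + (n - 1 - (a : ℕ))) % n then 1 else 0) :
    (Bm Y a).det ≠ 0 := by
  have hn : 0 < n := Nat.pos_of_ne_zero (NeZero.ne n)
  have ha := a.isLt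
  let c : Fin n := ⟨n - 1 - (a : ℕ), by omega⟩
  have hmat : Bm Y a = Equiv.Perm.permMatrix K (Equiv.addRight c) := by
    ext j q
    have hj := j.isLt
    have hqn := q.isLt
    rw [permMatrix_entry]
    have hco : (Equiv.addRight c) j = j + c := rfl
    have hvadd : ((j + c : Fin n) : ℕ) = ((j : ℕ) + (n - 1 - (a : ℕ))) % n := by
      rw [Fin.val_add]
    rw [hco]
    show (if a < j ∧ (q : ℕ) < n - 1 - (a : ℕ) then Y j q
      else if (j : ℕ) ≤ (a : ℕ) ∧ (q : ℕ) = n - 1 - (a : ℕ) + (j : ℕ) then 1 else 0) = _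
    rw [hY j q]
    by_cases hja : (j : ℕ) ≤ (a : ℕ)
    · have hmod : ((j : ℕ) + (n - 1 - (a : ℕ))) % n = (j : ℕ) + (n - 1 - (a : ℕ)) :=
        Nat.mod_eq_of_lt (by omega)
      rw [if_neg (fun hh => by have := Fin.lt_def.mp hh.1; omega)]
      have hiff : ((j : ℕ) ≤ (a : ℕ) ∧ (q : ℕ) = n - 1 - (a : ℕ) + (j : ℕ)) ↔ (j + c = q) := by
        rw [Fin.ext_iff, hvadd, hmod]
        constructor
        · rintro ⟨-, h2⟩; omega
        · intro h2; exact ⟨hja, by omega⟩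
      rw [if_congr hiff rfl rfl]
    · have haj : a < j := Fin.lt_def.mpr (by omega)
      have hmod : ((j : ℕ) + (n - 1 - (a : ℕ))) % n = (j : ℕ) - 1 - (a : ℕ) := by
        have h2 : (j : ℕ) + (n - 1 - (a : ℕ)) = n + ((j : ℕ) - 1 - (a : ℕ)) := by omega
        rw [h2, Nat.add_mod_left, Nat.mod_eq_of_lt (by omega)]
      by_cases hq2 : (q : ℕ) < n - 1 - (a : ℕ)
      · rw [if_pos ⟨haj, hq2⟩]
        have hiff : ((q : ℕ) = ((j : ℕ) + (n - 1 - (a : ℕ))) % n) ↔ (j + c = q) := by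
          rw [Fin.ext_iff, hvadd]; exact eq_comm
        rw [if_congr hiff rfl rfl]
      · rw [if_neg (fun hh => hq2 hh.2), if_neg (fun hh => hja hh.1), if_neg]
        intro hh
        rw [Fin.ext_iff, hvadd, hmod] at hh
        omega
  rw [hmat, Matrix.det_permutation]
  rcases Int.units_eq_one_or (Equiv.Perm.sign (Equiv.addRight c)) with h | h <;>
    rw [h] <;> norm_num

theorem Dm_pattern_det {K : Type*} [Field K] [NeZero n] (b : Fin n)
    (Y : Matrix (Fin n) (Fin n) K)
    (hY : ∀ q i : Fin n, Y q i = if (i : ℕ) = ((q : ℕ) + (b : ℕ)) % n then 1 else 0) :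
    (Dm Y b).det ≠ 0 := by
  have hn : 0 < n := Nat.pos_of_ne_zero (NeZero.ne n)
  have hb := b.isLt
  have hmat : Dm Y b = Equiv.Perm.permMatrix K (Equiv.addRight b) := by
    ext q i
    have hi := i.isLt
    have hqn := q.isLt
    rw [permMatrix_entry]
    have hco : (Equiv.addRight b) q = q + b := rfl
    have hvadd : ((q + b : Fin n) : ℕ) = ((q : ℕ) + (b : ℕ)) % n := by
      rw [Fin.val_add]
    rw [hco]
    show (if n - (b : ℕ) ≤ (q : ℕ) ∧ (i : ℕ) < (b : ℕ) then Y q i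
      else if (q : ℕ) < n - (b : ℕ) ∧ (i : ℕ) = (q : ℕ) + (b : ℕ) then 1 else 0) = _
    rw [hY q i]
    by_cases hqb : (q : ℕ) < n - (b : ℕ)
    · have hmod : ((q : ℕ) + (b : ℕ)) % n = (q : ℕ) + (b : ℕ) := Nat.mod_eq_of_lt (by omega)
      rw [if_neg (fun hh => by omega)]
      have hiff : ((q : ℕ) < n - (b : ℕ) ∧ (i : ℕ) = (q : ℕ) + (b : ℕ)) ↔ (q + b = i) := by
        rw [Fin.ext_iff, hvadd, hmod]
        constructor
        · rintro ⟨-, h2⟩; omega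
        · intro h2; exact ⟨hqb, by omega⟩
      rw [if_congr hiff rfl rfl]
    · have hmod : ((q : ℕ) + (b : ℕ)) % n = (q : ℕ) + (b : ℕ) - n := by
        rw [Nat.mod_eq_sub_mod (by omega), Nat.mod_eq_of_lt (by omega)]
      by_cases hi2 : (i : ℕ) < (b : ℕ)
      · rw [if_pos ⟨by omega, hi2⟩]
        have hiff : ((i : ℕ) = ((q : ℕ) + (b : ℕ)) % n) ↔ (q + b = i) := by
          rw [Fin.ext_iff, hvadd]; exact eq_comm
        rw [if_congr hiff rfl rfl]
      · rw [if_neg (fun hh => hi2 hh.2), if_neg (fun hh => hqb hh.1), if_neg]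
        intro hh
        rw [Fin.ext_iff, hvadd, hmod] at hh
        omega
  rw [hmat, Matrix.det_permutation]
  rcases Int.units_eq_one_or (Equiv.Perm.sign (Equiv.addRight b)) with h | h <;>
    rw [h] <;> norm_num

end QSec

/-- for infinite `K`: a `U_Q`-invariant polynomial function on
`H = Π_α Mat(n,K)` that vanishes identically on the section `S = Π_α S_α` is zero;
i.e. the restriction map `π : K[H]^{U_Q} → K[S]` is injective. A polynomial function
on `H` is encoded as an `MvPolynomial` in the variables `(α, a, b)`, evaluated at
`h : A → Matrix (Fin n) (Fin n) K` via `(α, a, b) ↦ (h α) a b`. -/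
theorem invariant_polynomial_vanishing_on_section_eq_zero
    {K : Type*} [Field K] [Infinite K] {n : ℕ} (hn : 1 ≤ n)
    {V A : Type*} [Fintype V] [Fintype A] (s t : A → V) (ψ : V → A)
    (hψ : ∀ v : V, s (ψ v) = v ∨ t (ψ v) = v)
    (f : MvPolynomial (A × Fin n × Fin n) K)
    (hinv : ∀ g : V → Matrix (Fin n) (Fin n) K, (∀ v, IsUT (g v)) →
      ∀ h : A → Matrix (Fin n) (Fin n) K,
        MvPolynomial.eval
            (fun p : A × Fin n × Fin n =>
              (g (t p.1) * h p.1 * (g (s p.1))⁻¹) p.2.1 p.2.2) f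
          = MvPolynomial.eval (fun p : A × Fin n × Fin n => h p.1 p.2.1 p.2.2) f)
    (hvanish : ∀ h : A → Matrix (Fin n) (Fin n) K, (∀ α : A, SMem s t ψ α (h α)) →
      MvPolynomial.eval (fun p : A × Fin n × Fin n => h p.1 p.2.1 p.2.2) f = 0) :
    f = 0 := by
  classical
  haveI : NeZero n := ⟨by omega⟩
  -- ## Setup: the generic point over the fraction field `L` of `K[H]`
  let P : Type _ := MvPolynomial (A × Fin n × Fin n) K
  let L : Type _ := FractionRing P
  let ι : P →+* L := algebraMap P L
  have hι : Function.Injective ι := IsFractionRing.injective P L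
  let XP : A → Matrix (Fin n) (Fin n) P := fun α => Matrix.of fun a b => MvPolynomial.X (α, a, b)
  let Xg : A → Matrix (Fin n) (Fin n) L := fun α => (XP α).map ι
  -- ## Genericity of the corner systems at the generic point
  have hdetB : ∀ (α : A) (a : Fin n), IsUnit (QSec.Bm (Xg α) a).det := by
    intro α a
    have h1 : QSec.Bm (Xg α) a = (QSec.Bm (XP α) a).map ι := (QSec.Bm_map ι (XP α) a).symm
    rw [h1, ← RingHom.mapMatrix_apply, ← RingHom.map_det, isUnit_iff_ne_zero]
    intro h0
    have hz : (QSec.Bm (XP α) a).det = 0 := hι (by rw [h0, map_zero])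
    have hev := congrArg
      (MvPolynomial.eval (fun p : (A × Fin n × Fin n) =>
        if (p.2.2 : ℕ) = ((p.2.1 : ℕ) + (n - 1 - (a : ℕ))) % n then (1 : K) else 0)) hz
    rw [map_zero, RingHom.map_det, RingHom.mapMatrix_apply, QSec.Bm_map] at hev
    exact QSec.Bm_pattern_det a _
      (fun j q => by
        show (MvPolynomial.eval _) (XP α j q) = _
        rw [show XP α j q = MvPolynomial.X (α, j, q) from rfl, MvPolynomial.eval_X]) hev
  have hdetD : ∀ (α : A) (b : Fin n), IsUnit (QSec.Dm (Xg α) b).det := by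
    intro α b
    have h1 : QSec.Dm (Xg α) b = (QSec.Dm (XP α) b).map ι := (QSec.Dm_map ι (XP α) b).symm
    rw [h1, ← RingHom.mapMatrix_apply, ← RingHom.map_det, isUnit_iff_ne_zero]
    intro h0
    have hz : (QSec.Dm (XP α) b).det = 0 := hι (by rw [h0, map_zero])
    have hev := congrArg
      (MvPolynomial.eval (fun p : (A × Fin n × Fin n) =>
        if (p.2.2 : ℕ) = ((p.2.1 : ℕ) + (b : ℕ)) % n then (1 : K) else 0)) hz
    rw [map_zero, RingHom.map_det, RingHom.mapMatrix_apply, QSec.Dm_map] at hev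
    exact QSec.Dm_pattern_det b _
      (fun q i => by
        show (MvPolynomial.eval _) (XP α q i) = _
        rw [show XP α q i = MvPolynomial.X (α, q, i) from rfl, MvPolynomial.eval_X]) hev
  -- ## The unitriangular group element moving the generic point into the section
  let g : V → Matrix (Fin n) (Fin n) L := fun v =>
    if t (ψ v) = v then QSec.uL (Xg (ψ v)) else (QSec.rR (Xg (ψ v)))⁻¹
  have hgdef : ∀ v, g v =
      if t (ψ v) = v then QSec.uL (Xg (ψ v)) else (QSec.rR (Xg (ψ v)))⁻¹ := fun _ => rfl
  have hrdet : ∀ β : A, IsUnit (QSec.rR (Xg β)).det := fun β => by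
    rw [QSec.isUT_det (QSec.rR_isUT _ (hdetD β))]; exact isUnit_one
  have hgUT : ∀ v, IsUT (g v) := by
    intro v
    rw [hgdef v]
    by_cases hv : t (ψ v) = v
    · rw [if_pos hv]; exact QSec.uL_isUT _ (hdetB (ψ v))
    · rw [if_neg hv]; exact QSec.isUT_inv (QSec.rR_isUT _ (hdetD (ψ v)))
  have hgt : ∀ β : A, β = ψ (t β) → g (t β) = QSec.uL (Xg β) := by
    intro β h
    rw [hgdef (t β), ← h, if_pos rfl]
  have hgs : ∀ β : A, β = ψ (s β) → t β ≠ s β → g (s β) = (QSec.rR (Xg β))⁻¹ := by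
    intro β h hne
    rw [hgdef (s β), ← h, if_neg hne]
  -- ## The transformed generic point lies in the section
  have hSM : ∀ α : A, SMem s t ψ α (g (t α) * Xg α * (g (s α))⁻¹) := by
    intro α
    constructor
    · intro hl hψs
      have hψt : α = ψ (t α) := by rw [← hl]; exact hψs
      have hgs' : g (s α) = QSec.uL (Xg α) := by rw [hl]; exact hgt α hψt
      rw [hgt α hψt, hgs']
      exact QSec.lowerAnti_mul (QSec.uL_lowerAnti _ (hdetB α))
        (QSec.isUT_inv (QSec.uL_isUT _ (hdetB α))).2
    · intro hne
      refine ⟨?_, ?_, ?_⟩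
      · rintro ⟨hψt, -⟩
        rw [hgt α hψt]
        exact QSec.lowerAnti_mul (QSec.uL_lowerAnti _ (hdetB α))
          (QSec.isUT_inv (hgUT (s α))).2
      · rintro ⟨hψs, -⟩
        rw [hgs α hψs (fun hh => hne hh.symm), Matrix.nonsing_inv_nonsing_inv _ (hrdet α),
          Matrix.mul_assoc]
        exact QSec.mul_upperAnti (QSec.rR_upperAnti _ (hdetD α)) (hgUT (t α)).2
      · rintro ⟨hψs, hψt⟩
        rw [hgt α hψt, hgs α hψs (fun hh => hne hh.symm),
          Matrix.nonsing_inv_nonsing_inv _ (hrdet α)]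
        intro a b hab
        rcases Nat.lt_or_ge ((a : ℕ) + (b : ℕ)) (n - 1) with hlt | hge
        · exact QSec.lowerAnti_mul (QSec.uL_lowerAnti _ (hdetB α))
            (QSec.rR_isUT _ (hdetD α)).2 a b hlt
        · rw [Matrix.mul_assoc]
          exact QSec.mul_upperAnti (QSec.rR_upperAnti _ (hdetD α))
            (QSec.uL_isUT _ (hdetB α)).2 a b (by omega)
  -- ## The mask describing the coordinate subspace `S`
  let allowed : (A × Fin n × Fin n) → Prop := fun p =>
    (s p.1 = t p.1 → (p.1 = ψ (s p.1) → n - 1 ≤ (p.2.1 : ℕ) + (p.2.2 : ℕ))) ∧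
    (s p.1 ≠ t p.1 →
      ((p.1 = ψ (t p.1) ∧ p.1 ≠ ψ (s p.1)) → n - 1 ≤ (p.2.1 : ℕ) + (p.2.2 : ℕ)) ∧
      ((p.1 = ψ (s p.1) ∧ p.1 ≠ ψ (t p.1)) → (p.2.1 : ℕ) + (p.2.2 : ℕ) ≤ n - 1) ∧
      ((p.1 = ψ (s p.1) ∧ p.1 = ψ (t p.1)) → (p.2.1 : ℕ) + (p.2.2 : ℕ) = n - 1))
  have hmask : ∀ {F : Type _} [Field F] (N : Matrix (Fin n) (Fin n) F) (α : A),
      SMem s t ψ α N → ∀ a b : Fin n, ¬ allowed (α, a, b) → N a b = 0 := by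
    intro F _ N α hN a b hnal
    by_cases hst : s α = t α
    · by_cases h1 : α = ψ (s α)
      · rcases Nat.lt_or_ge ((a : ℕ) + (b : ℕ)) (n - 1) with h | h
        · exact hN.1 hst h1 a b h
        · exact absurd ⟨fun _ _ => h, fun hc => absurd hst hc⟩ hnal
      · exact absurd ⟨fun _ hh => absurd hh h1, fun hc => absurd hst hc⟩ hnal
    · by_cases hψs' : α = ψ (s α) <;> by_cases hψt' : α = ψ (t α)
      · by_cases heq : (a : ℕ) + (b : ℕ) = n - 1
        · exact absurd ⟨fun hc => absurd hc hst,
            fun _ => ⟨fun hx => absurd hψs' hx.2, fun hx => absurd hψt' hx.2,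
              fun _ => heq⟩⟩ hnal
        · exact (hN.2 hst).2.2 ⟨hψs', hψt'⟩ a b heq
      · by_cases hle : (a : ℕ) + (b : ℕ) ≤ n - 1
        · exact absurd ⟨fun hc => absurd hc hst,
            fun _ => ⟨fun hx => absurd hx.1 hψt', fun _ => hle,
              fun hx => absurd hx.2 hψt'⟩⟩ hnal
        · exact (hN.2 hst).2.1 ⟨hψs', hψt'⟩ a b (by omega)
      · by_cases hge : n - 1 ≤ (a : ℕ) + (b : ℕ)
        · exact absurd ⟨fun hc => absurd hc hst,
            fun _ => ⟨fun _ => hge, fun hx => absurd hx.1 hψs',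
              fun hx => absurd hx.1 hψs'⟩⟩ hnal
        · exact (hN.2 hst).1 ⟨hψt', hψs'⟩ a b (by omega)
      · exact absurd ⟨fun hc => absurd hc hst,
          fun _ => ⟨fun hx => absurd hx.1 hψt', fun hx => absurd hx.1 hψs',
            fun hx => absurd hx.1 hψs'⟩⟩ hnal
  have hmaskK : ∀ (x : (A × Fin n × Fin n) → K) (α : A),
      SMem s t ψ α (Matrix.of fun a b : Fin n => if allowed (α, a, b) then x (α, a, b) else 0) := by
    intro x α
    constructor
    · intro hst h1 a b hab
      show (if allowed (α, a, b) then _ else (0 : K)) = 0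
      rw [if_neg]
      intro hal
      have hcon : n - 1 ≤ (a : ℕ) + (b : ℕ) := hal.1 hst h1
      omega
    · intro hst
      refine ⟨?_, ?_, ?_⟩
      · rintro ⟨h1, h2⟩ a b hab
        show (if allowed (α, a, b) then _ else (0 : K)) = 0
        rw [if_neg]
        intro hal
        have hcon : n - 1 ≤ (a : ℕ) + (b : ℕ) := (hal.2 hst).1 ⟨h1, h2⟩
        omega
      · rintro ⟨h1, h2⟩ a b hab
        show (if allowed (α, a, b) then _ else (0 : K)) = 0
        rw [if_neg]
        intro hal
        have hcon : (a : ℕ) + (b : ℕ) ≤ n - 1 := (hal.2 hst).2.1 ⟨h1, h2⟩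
        omega
      · rintro ⟨h1, h2⟩ a b hab
        show (if allowed (α, a, b) then _ else (0 : K)) = 0
        rw [if_neg]
        intro hal
        have hcon : (a : ℕ) + (b : ℕ) = n - 1 := (hal.2 hst).2.2 ⟨h1, h2⟩
        omega
  -- ## Step B : the polynomial obtained by masking the variables is zero
  let Svals : (A × Fin n × Fin n) → P := fun p => if allowed p then MvPolynomial.X p else 0
  have hFS : MvPolynomial.eval₂ MvPolynomial.C Svals f = 0 := by
    apply MvPolynomial.funext
    intro x
    rw [map_zero, MvPolynomial.eval_eval₂,
      show (MvPolynomial.eval x).comp MvPolynomial.C = RingHom.id K from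
        RingHom.ext fun c => MvPolynomial.eval_C _,
      MvPolynomial.eval₂_id]
    have hfn : (fun p : (A × Fin n × Fin n) => MvPolynomial.eval x (Svals p)) =
        (fun p : (A × Fin n × Fin n) =>
          (fun α => Matrix.of fun a b : Fin n =>
            if allowed (α, a, b) then x (α, a, b) else 0) p.1 p.2.1 p.2.2) := by
      funext p
      show MvPolynomial.eval x (if allowed p then MvPolynomial.X p else 0) = _
      rw [apply_ite (MvPolynomial.eval x), MvPolynomial.eval_X, map_zero]
      rfl
    rw [hfn]
    exact hvanish
      (fun α => Matrix.of fun a b : Fin n => if allowed (α, a, b) then x (α, a, b) else 0)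
      (fun α => hmaskK x α)
  let Mvals : (A × Fin n × Fin n) → L := fun p => (g (t p.1) * Xg p.1 * (g (s p.1))⁻¹) p.2.1 p.2.2
  let φL : K →+* L := ι.comp MvPolynomial.C
  have hEqII : MvPolynomial.eval₂ φL Mvals f = 0 := by
    have h2 := congrArg (MvPolynomial.eval₂Hom φL Mvals) hFS
    rw [map_zero] at h2
    rw [show (MvPolynomial.eval₂Hom φL Mvals) (MvPolynomial.eval₂ MvPolynomial.C Svals f)
        = MvPolynomial.eval₂ ((MvPolynomial.eval₂Hom φL Mvals).comp MvPolynomial.C)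
            ((MvPolynomial.eval₂Hom φL Mvals) ∘ Svals) f from
      MvPolynomial.eval₂_comp_left _ _ _ _] at h2
    rw [show ((MvPolynomial.eval₂Hom φL Mvals).comp MvPolynomial.C) = φL from
      RingHom.ext fun c => MvPolynomial.eval₂Hom_C _ _ _] at h2
    have hS : (MvPolynomial.eval₂Hom φL Mvals) ∘ Svals = Mvals := by
      funext p
      show (MvPolynomial.eval₂Hom φL Mvals) (if allowed p then MvPolynomial.X p else 0) = _
      rw [apply_ite (MvPolynomial.eval₂Hom φL Mvals), MvPolynomial.eval₂Hom_X', map_zero]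
      by_cases hal : allowed p
      · rw [if_pos hal]
      · rw [if_neg hal]
        exact (hmask _ p.1 (hSM p.1) p.2.1 p.2.2 hal).symm
    rw [hS] at h2
    exact h2
  -- ## Step A : invariance transfers to `L`
  let σQ : Type _ := (V × Fin n × Fin n) ⊕ (A × Fin n × Fin n)
  let GQ : V → Matrix (Fin n) (Fin n) (MvPolynomial σQ K) := fun v =>
    Matrix.of fun i j =>
      if i = j then 1
      else if (i : ℕ) < (j : ℕ) then MvPolynomial.X (Sum.inl (v, i, j)) else 0
  let XQ : A → Matrix (Fin n) (Fin n) (MvPolynomial σQ K) := fun α =>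
    Matrix.of fun a b => MvPolynomial.X (Sum.inr (α, a, b))
  let vals1 : (A × Fin n × Fin n) → MvPolynomial σQ K := fun p =>
    (GQ (t p.1) * XQ p.1 * (GQ (s p.1)).adjugate) p.2.1 p.2.2
  let vals2 : (A × Fin n × Fin n) → MvPolynomial σQ K := fun p => XQ p.1 p.2.1 p.2.2
  have hQ : MvPolynomial.eval₂ MvPolynomial.C vals1 f
      = MvPolynomial.eval₂ MvPolynomial.C vals2 f := by
    apply MvPolynomial.funext
    intro x
    rw [MvPolynomial.eval_eval₂, MvPolynomial.eval_eval₂,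
      show (MvPolynomial.eval x).comp MvPolynomial.C = RingHom.id K from
        RingHom.ext fun c => MvPolynomial.eval_C _,
      MvPolynomial.eval₂_id, MvPolynomial.eval₂_id]
    let gK : V → Matrix (Fin n) (Fin n) K := fun v => (GQ v).map (MvPolynomial.eval x)
    let hK : A → Matrix (Fin n) (Fin n) K := fun α => (XQ α).map (MvPolynomial.eval x)
    have hgKUT : ∀ v, IsUT (gK v) := by
      intro v
      constructor
      · intro i
        show MvPolynomial.eval x (GQ v i i) = 1
        rw [show GQ v i i = 1 from if_pos rfl, _root_.map_one (MvPolynomial.eval x)]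
      · intro i j hij
        show MvPolynomial.eval x (GQ v i j) = 0
        rw [show GQ v i j = 0 from by
          rw [show GQ v i j = (if i = j then 1
            else if (i : ℕ) < (j : ℕ) then MvPolynomial.X (Sum.inl (v, i, j)) else 0) from rfl,
            if_neg (by rintro rfl; omega), if_neg (by omega)], map_zero]
    have key1 : (fun p : (A × Fin n × Fin n) => MvPolynomial.eval x (vals1 p)) =
        (fun p : (A × Fin n × Fin n) => (gK (t p.1) * hK p.1 * (gK (s p.1))⁻¹) p.2.1 p.2.2) := by
      funext p
      show MvPolynomial.eval x ((GQ (t p.1) * XQ p.1 * (GQ (s p.1)).adjugate) p.2.1 p.2.2) = _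
      rw [show MvPolynomial.eval x ((GQ (t p.1) * XQ p.1 * (GQ (s p.1)).adjugate) p.2.1 p.2.2)
          = ((GQ (t p.1) * XQ p.1 * (GQ (s p.1)).adjugate).map (MvPolynomial.eval x)) p.2.1 p.2.2
          from rfl]
      rw [Matrix.map_mul, Matrix.map_mul]
      rw [show ((GQ (s p.1)).adjugate).map (MvPolynomial.eval x)
          = ((GQ (s p.1)).map (MvPolynomial.eval x)).adjugate from by
        have := (MvPolynomial.eval x).map_adjugate (GQ (s p.1))
        rwa [RingHom.mapMatrix_apply, RingHom.mapMatrix_apply] at this]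
      rw [show ((GQ (s p.1)).map (MvPolynomial.eval x)).adjugate = (gK (s p.1))⁻¹ from
        (QSec.isUT_inv_eq_adjugate (hgKUT (s p.1))).symm]
    have key2 : (fun p : (A × Fin n × Fin n) => MvPolynomial.eval x (vals2 p)) =
        (fun p : (A × Fin n × Fin n) => hK p.1 p.2.1 p.2.2) := rfl
    rw [key1, key2]
    exact hinv gK hgKUT hK
  let yQ : σQ → L :=
    Sum.elim (fun w : V × Fin n × Fin n => g w.1 w.2.1 w.2.2)
      (fun p : (A × Fin n × Fin n) => ι (MvPolynomial.X p))
  let ρ : MvPolynomial σQ K →+* L := MvPolynomial.eval₂Hom φL yQ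
  have hGQmap : ∀ v, (GQ v).map ρ = g v := by
    intro v
    ext i j
    show ρ (GQ v i j) = g v i j
    rw [show GQ v i j = (if i = j then 1
      else if (i : ℕ) < (j : ℕ) then MvPolynomial.X (Sum.inl (v, i, j)) else 0) from rfl]
    by_cases hij : i = j
    · rw [if_pos hij, _root_.map_one ρ, hij, (hgUT v).1 j]
    · rw [if_neg hij]
      by_cases hlt : (i : ℕ) < (j : ℕ)
      · rw [if_pos hlt, MvPolynomial.eval₂Hom_X']
        rfl
      · rw [if_neg hlt, map_zero, (hgUT v).2 i j (by omega)]
  have hXQmap : ∀ α, (XQ α).map ρ = Xg α := by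
    intro α
    ext a b
    show ρ (XQ α a b) = Xg α a b
    rw [show XQ α a b = MvPolynomial.X (Sum.inr (α, a, b)) from rfl,
      MvPolynomial.eval₂Hom_X']
    rfl
  have hEqI : MvPolynomial.eval₂ φL Mvals f
      = MvPolynomial.eval₂ φL (fun p : (A × Fin n × Fin n) => Xg p.1 p.2.1 p.2.2) f := by
    have h2 := congrArg ρ hQ
    rw [show ρ (MvPolynomial.eval₂ MvPolynomial.C vals1 f)
        = MvPolynomial.eval₂ (ρ.comp MvPolynomial.C) (ρ ∘ vals1) f from
      MvPolynomial.eval₂_comp_left _ _ _ _] at h2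
    rw [show ρ (MvPolynomial.eval₂ MvPolynomial.C vals2 f)
        = MvPolynomial.eval₂ (ρ.comp MvPolynomial.C) (ρ ∘ vals2) f from
      MvPolynomial.eval₂_comp_left _ _ _ _] at h2
    rw [show (ρ.comp MvPolynomial.C) = φL from
      RingHom.ext fun c => MvPolynomial.eval₂Hom_C _ _ _] at h2
    have hv1 : ρ ∘ vals1 = Mvals := by
      funext p
      show ρ ((GQ (t p.1) * XQ p.1 * (GQ (s p.1)).adjugate) p.2.1 p.2.2) = _
      rw [show ρ ((GQ (t p.1) * XQ p.1 * (GQ (s p.1)).adjugate) p.2.1 p.2.2)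
          = ((GQ (t p.1) * XQ p.1 * (GQ (s p.1)).adjugate).map ρ) p.2.1 p.2.2 from rfl]
      rw [Matrix.map_mul, Matrix.map_mul]
      rw [show ((GQ (s p.1)).adjugate).map ρ = ((GQ (s p.1)).map ρ).adjugate from by
        have := ρ.map_adjugate (GQ (s p.1))
        rwa [RingHom.mapMatrix_apply, RingHom.mapMatrix_apply] at this]
      rw [hGQmap, hGQmap, hXQmap]
      rw [show (g (s p.1)).adjugate = (g (s p.1))⁻¹ from
        (QSec.isUT_inv_eq_adjugate (hgUT (s p.1))).symm]
    have hv2 : ρ ∘ vals2 = (fun p : (A × Fin n × Fin n) => Xg p.1 p.2.1 p.2.2) := by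
      funext p
      show ρ (XQ p.1 p.2.1 p.2.2) = _
      rw [show ρ (XQ p.1 p.2.1 p.2.2) = ((XQ p.1).map ρ) p.2.1 p.2.2 from rfl, hXQmap]
    rw [hv1, hv2] at h2
    exact h2
  -- ## Step C : conclusion
  have hXgf : MvPolynomial.eval₂ φL (fun p : (A × Fin n × Fin n) => Xg p.1 p.2.1 p.2.2) f = ι f := by
    have hfn : (fun p : (A × Fin n × Fin n) => Xg p.1 p.2.1 p.2.2) = ι ∘ MvPolynomial.X := by
      funext p
      rfl
    rw [hfn, show φL = ι.comp MvPolynomial.C from rfl,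
      ← MvPolynomial.eval₂_comp_left ι MvPolynomial.C MvPolynomial.X f,
      MvPolynomial.eval₂_eta]
  have hf0 : ι f = 0 := by
    rw [← hXgf, ← hEqI, hEqII]
  exact hι (by rw [hf0, map_zero])
end

section
/- Fix (i,k) with i' < k and regard P_{ik}(X,Y) as a polynomial in the 2n² variables x_{ab}, y_{ab}. Then P_{ik}(X,Y) = f₀·x_{ik} + f₁, where f₀ and f₁ are polynomials involving only the variables y_{ab} and the variables x_{ab} with (a,b) ≺ (i,k), and f₀ is a nonzero polynomial. (Order on pairs: (a,b) ≺ (i,k) iff b < k, or b = k and a > i.) -/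
open Matrix

open MvPolynomial in
private lemma det_mem_supported {K : Type*} [CommRing K] {σ : Type*} {m : ℕ} (s : Set σ)
    (A : Matrix (Fin m) (Fin m) (MvPolynomial σ K))
    (h : ∀ r c, A r c ∈ supported K s) : A.det ∈ supported K s := by
  rw [Matrix.det_apply']
  exact Subalgebra.sum_mem _ fun p _ =>
    mul_mem (Subalgebra.intCast_mem _ _) (Subalgebra.prod_mem _ fun j _ => h _ _)

set_option maxHeartbeats 1000000 in
open MvPolynomial in
/-- regarded as a polynomial in the `2n²` variables `x_{ab}, y_{ab}`,
`P_{ik}(X,Y) = f₀ · x_{ik} + f₁` where `f₀ ≠ 0` and `f₀, f₁` involve only the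
variables `y_{ab}` and the variables `x_{ab}` with `(a,b) ≺ (i,k)`
(`(a,b) ≺ (i,k)` iff `b < k`, or `b = k` and `a > i`). -/
theorem Pmin_triangular {K : Type*} [Field K] {n : ℕ}
    (i k : ℕ) (hi1 : 1 ≤ i) (hi2 : i ≤ n) (hk : k ≤ n) (hik : n + 1 - i < k) :
    ∃ f₀ f₁ : MvPolynomial ((Fin n × Fin n) ⊕ (Fin n × Fin n)) K,
      f₀ ≠ 0 ∧
      Pmin i k
          (Matrix.of fun a b : Fin n => (X (Sum.inl (a, b)) : MvPolynomial _ K))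
          (Matrix.of fun a b : Fin n => (X (Sum.inr (a, b)) : MvPolynomial _ K))
        = f₀ * X (Sum.inl (⟨i - 1, by omega⟩, ⟨k - 1, by omega⟩)) + f₁ ∧
      (∀ v ∈ f₀.vars,
        Sum.elim (fun p : Fin n × Fin n =>
          (p.2 : ℕ) + 1 < k ∨ ((p.2 : ℕ) + 1 = k ∧ i < (p.1 : ℕ) + 1)) (fun _ => True) v) ∧
      (∀ v ∈ f₁.vars,
        Sum.elim (fun p : Fin n × Fin n =>
          (p.2 : ℕ) + 1 < k ∨ ((p.2 : ℕ) + 1 = k ∧ i < (p.1 : ℕ) + 1)) (fun _ => True) v) := by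
  classical
  haveI : NeZero (n + 1 - i) := ⟨by omega⟩
  set Xg : Matrix (Fin n) (Fin n) (MvPolynomial ((Fin n × Fin n) ⊕ (Fin n × Fin n)) K) :=
    Matrix.of fun a b : Fin n => X (Sum.inl (a, b)) with hXg
  set Yg : Matrix (Fin n) (Fin n) (MvPolynomial ((Fin n × Fin n) ⊕ (Fin n × Fin n)) K) :=
    Matrix.of fun a b : Fin n => X (Sum.inr (a, b)) with hYg
  set S : Subalgebra K (MvPolynomial ((Fin n × Fin n) ⊕ (Fin n × Fin n)) K) :=
    MvPolynomial.supported K ({v | Sum.elim (fun p : Fin n × Fin n =>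
      (p.2 : ℕ) + 1 < k ∨ ((p.2 : ℕ) + 1 = k ∧ i < (p.1 : ℕ) + 1)) (fun _ => True) v}) with hS
  -- evaluating entries
  have hXval : ∀ (a b : ℕ) (h1 : 1 ≤ a) (h2 : a ≤ n) (h3 : 1 ≤ b) (h4 : b ≤ n),
      ent Xg a b = X (Sum.inl ((⟨a - 1, by omega⟩ : Fin n), (⟨b - 1, by omega⟩ : Fin n))) := by
    intro a b h1 h2 h3 h4
    unfold ent
    rw [dif_pos ⟨h1, h2, h3, h4⟩]
    rfl
  have hYval : ∀ (a b : ℕ) (h1 : 1 ≤ a) (h2 : a ≤ n) (h3 : 1 ≤ b) (h4 : b ≤ n),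
      ent Yg a b = X (Sum.inr ((⟨a - 1, by omega⟩ : Fin n), (⟨b - 1, by omega⟩ : Fin n))) := by
    intro a b h1 h2 h3 h4
    unfold ent
    rw [dif_pos ⟨h1, h2, h3, h4⟩]
    rfl
  -- membership of entries
  have entX_mem : ∀ a b : ℕ, (b < k ∨ (b = k ∧ i < a)) → ent Xg a b ∈ S := by
    intro a b hb
    unfold ent
    split
    · next h =>
      show X (Sum.inl ((⟨a - 1, by omega⟩ : Fin n), (⟨b - 1, by omega⟩ : Fin n))) ∈ S
      rw [hS, MvPolynomial.X_mem_supported]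
      show (b - 1) + 1 < k ∨ ((b - 1) + 1 = k ∧ i < (a - 1) + 1)
      omega
    · exact zero_mem _
  have entY_mem : ∀ a b : ℕ, ent Yg a b ∈ S := by
    intro a b
    unfold ent
    split
    · next h =>
      show X (Sum.inr ((⟨a - 1, by omega⟩ : Fin n), (⟨b - 1, by omega⟩ : Fin n))) ∈ S
      rw [hS, MvPolynomial.X_mem_supported]
      trivial
    · exact zero_mem _
  have hNmem : ∀ j : ℕ, Nmin j k Yg ∈ S := by
    intro j
    unfold Nmin
    exact det_mem_supported _ _ fun r c => entY_mem _ _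
  have hMmem : ∀ j : ℕ, j < k → Mmin i j Xg ∈ S := by
    intro j hj
    unfold Mmin
    refine det_mem_supported _ _ fun r c => ?_
    show ent Xg (i + r.val) (if c.val < n - i then 1 + c.val else j) ∈ S
    split
    · next h => exact entX_mem _ _ (Or.inl (by omega))
    · exact entX_mem _ _ (Or.inl hj)
  -- the matrix of `Mmin i k`
  set A : Matrix (Fin (n + 1 - i)) (Fin (n + 1 - i))
      (MvPolynomial ((Fin n × Fin n) ⊕ (Fin n × Fin n)) K) :=
    Matrix.of fun r c : Fin (n + 1 - i) =>
      ent Xg (i + r.val) (if c.val < n - i then 1 + c.val else k) with hAdef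
  have hA : Mmin i k Xg = A.det := rfl
  set lst : Fin (n + 1 - i) := ⟨n - i, by omega⟩ with hlst
  set xik : MvPolynomial ((Fin n × Fin n) ⊕ (Fin n × Fin n)) K :=
    X (Sum.inl ((⟨i - 1, by omega⟩ : Fin n), (⟨k - 1, by omega⟩ : Fin n))) with hxik
  have hA0lst : A 0 lst = xik := by
    show ent Xg (i + (0 : Fin (n + 1 - i)).val) (if (lst : Fin (n + 1 - i)).val < n - i then 1 + lst.val else k) = xik
    have h0 : (0 : Fin (n + 1 - i)).val = 0 := rfl
    have hl : (lst : Fin (n + 1 - i)).val = n - i := rfl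
    rw [h0, hl, if_neg (lt_irrefl _), Nat.add_zero]
    rw [hXval i k hi1 hi2 (by omega) hk]
  have hA0 : A 0 = Function.update (A 0) lst 0 + xik • (Pi.single lst 1 : Fin (n + 1 - i) → MvPolynomial ((Fin n × Fin n) ⊕ (Fin n × Fin n)) K) := by
    funext c
    simp only [Pi.add_apply, Pi.smul_apply, smul_eq_mul]
    by_cases hc : c = lst
    · subst hc
      rw [Function.update_self, Pi.single_eq_same, hA0lst]
      ring
    · rw [Function.update_of_ne hc, Pi.single_eq_of_ne hc]
      ring
  set g := (A.updateRow 0 (Function.update (A 0) lst 0)).det with hgdef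
  set C := (A.updateRow 0 (Pi.single lst (1 : MvPolynomial ((Fin n × Fin n) ⊕ (Fin n × Fin n)) K))).det with hCdef
  have hMik : Mmin i k Xg = g + xik * C := by
    rw [hA]
    conv_lhs => rw [← Matrix.updateRow_eq_self A 0, hA0]
    rw [Matrix.det_updateRow_add, Matrix.det_updateRow_smul]
  -- splitting of the sum
  have hknot : k ∉ Finset.Icc (n + 1 - i) (k - 1) := by
    simp only [Finset.mem_Icc]
    omega
  have hsum : Pmin i k Xg Yg = Mmin i k Xg * Nmin k k Yg
      + ∑ j ∈ Finset.Icc (n + 1 - i) (k - 1), Mmin i j Xg * Nmin j k Yg := by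
    unfold Pmin
    rw [show Finset.Icc (n + 1 - i) k = insert k (Finset.Icc (n + 1 - i) (k - 1)) by
      ext j
      simp only [Finset.mem_Icc, Finset.mem_insert]
      omega]
    rw [Finset.sum_insert hknot]
  -- memberships of g and C
  have hgmem : g ∈ S := by
    rw [hgdef]
    refine det_mem_supported _ _ fun r c => ?_
    rw [Matrix.updateRow_apply]
    split
    · by_cases hc : c = lst
      · rw [hc, Function.update_self]
        exact zero_mem _
      · rw [Function.update_of_ne hc]
        show ent Xg (i + (0 : Fin (n + 1 - i)).val) (if c.val < n - i then 1 + c.val else k) ∈ S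
        have hcv : c.val ≠ n - i := fun h => hc (Fin.ext h)
        have hclt : c.val < n - i := by have := c.isLt; omega
        rw [if_pos hclt]
        exact entX_mem _ _ (Or.inl (by omega))
    · next hr =>
      show ent Xg (i + r.val) (if c.val < n - i then 1 + c.val else k) ∈ S
      have hrv : r.val ≠ 0 := fun h => hr (Fin.ext (h.trans rfl))
      split
      · next h => exact entX_mem _ _ (Or.inl (by omega))
      · exact entX_mem _ _ (Or.inr ⟨rfl, by omega⟩)
  have hCmem : C ∈ S := by
    rw [hCdef]
    refine det_mem_supported _ _ fun r c => ?_
    rw [Matrix.updateRow_apply]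
    split
    · by_cases hc : c = lst
      · rw [hc, Pi.single_eq_same]
        exact one_mem _
      · rw [Pi.single_eq_of_ne hc]
        exact zero_mem _
    · next hr =>
      show ent Xg (i + r.val) (if c.val < n - i then 1 + c.val else k) ∈ S
      have hrv : r.val ≠ 0 := fun h => hr (Fin.ext (h.trans rfl))
      split
      · next h => exact entX_mem _ _ (Or.inl (by omega))
      · exact entX_mem _ _ (Or.inr ⟨rfl, by omega⟩)
  -- the evaluation showing f₀ ≠ 0
  set val : ((Fin n × Fin n) ⊕ (Fin n × Fin n)) → K :=
    Sum.elim (fun p => if (p.1 : ℕ) + (p.2 : ℕ) + 2 = n + 1 then 1 else 0)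
      (fun q => if (q.1 : ℕ) = k - 1 + (q.2 : ℕ) then 1 else 0) with hval
  have hC0 : MvPolynomial.aeval val C ≠ 0 := by
    have key : ∀ r c : Fin (n + 1 - i),
        MvPolynomial.aeval val ((A.updateRow 0 (Pi.single lst (1 : MvPolynomial ((Fin n × Fin n) ⊕ (Fin n × Fin n)) K))) r c)
          = if r.val + c.val = n - i then 1 else 0 := by
      intro r c
      rw [Matrix.updateRow_apply]
      split
      · next hr =>
        subst hr
        have h0 : (0 : Fin (n + 1 - i)).val = 0 := rfl
        by_cases hc : c = lst
        · subst hc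
          have hlv : lst.val = n - i := rfl
          rw [Pi.single_eq_same, _root_.map_one, if_pos (by rw [h0]; omega)]
        · have hlv : lst.val = n - i := rfl
          rw [Pi.single_eq_of_ne hc, _root_.map_zero,
            if_neg (by rw [h0]; exact fun h => hc (Fin.ext (by omega)))]
      · next hr =>
        have hrv : r.val ≠ 0 := fun h => hr (Fin.ext (h.trans rfl))
        have hrlt : r.val < n + 1 - i := r.isLt
        have hclt : c.val < n + 1 - i := c.isLt
        show MvPolynomial.aeval val (ent Xg (i + r.val) (if c.val < n - i then 1 + c.val else k)) = _
        split
        · next h =>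
          rw [hXval (i + r.val) (1 + c.val) (by omega) (by omega) (by omega) (by omega),
            MvPolynomial.aeval_X]
          show (if (i + r.val - 1) + (1 + c.val - 1) + 2 = n + 1 then (1:K) else 0) = _
          split_ifs with h1 h2 <;> first | rfl | (exfalso; omega)
        · next h =>
          rw [hXval (i + r.val) k (by omega) (by omega) (by omega) hk, MvPolynomial.aeval_X]
          show (if (i + r.val - 1) + (k - 1) + 2 = n + 1 then (1:K) else 0) = _
          split_ifs with h1 h2 <;> first | rfl | (exfalso; omega)
    have h1 : MvPolynomial.aeval val C
        = ((1 : Matrix (Fin (n + 1 - i)) (Fin (n + 1 - i)) K).submatrix (⇑(Fin.revPerm)) id).det := by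
      rw [hCdef]
      rw [show (MvPolynomial.aeval val)
            ((A.updateRow 0 (Pi.single lst (1 : MvPolynomial ((Fin n × Fin n) ⊕ (Fin n × Fin n)) K))).det)
          = (((MvPolynomial.aeval val).toRingHom).mapMatrix
            (A.updateRow 0 (Pi.single lst (1 : MvPolynomial ((Fin n × Fin n) ⊕ (Fin n × Fin n)) K)))).det
        from RingHom.map_det _ _]
      congr 1
      ext r c
      rw [RingHom.mapMatrix_apply, Matrix.map_apply]
      show MvPolynomial.aeval val _ = _
      rw [key r c, Matrix.submatrix_apply, id_eq, Matrix.one_apply]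
      have hrlt : r.val < n + 1 - i := r.isLt
      have hclt : c.val < n + 1 - i := c.isLt
      have hrev : (Fin.revPerm r : Fin (n + 1 - i)) = r.rev := rfl
      have hiff : ((Fin.revPerm r : Fin (n + 1 - i)) = c) ↔ (r.val + c.val = n - i) := by
        rw [hrev, Fin.ext_iff, Fin.val_rev]
        omega
      by_cases hrc : r.val + c.val = n - i
      · rw [if_pos hrc, if_pos (hiff.2 hrc)]
      · rw [if_neg hrc, if_neg (fun h => hrc (hiff.1 h))]
    rw [h1, Matrix.det_permute, Matrix.det_one, mul_one]
    rcases Int.units_eq_one_or (Equiv.Perm.sign (Fin.revPerm : Equiv.Perm (Fin (n + 1 - i)))) with h | h <;>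
      rw [h] <;> simp
  have hN1 : MvPolynomial.aeval val (Nmin k k Yg) = 1 := by
    unfold Nmin
    rw [show (MvPolynomial.aeval val)
          ((Matrix.of fun r c : Fin (n + 1 - k) =>
            ent Yg (if r.val = 0 then k else k + r.val) (1 + c.val)).det)
        = (((MvPolynomial.aeval val).toRingHom).mapMatrix
          (Matrix.of fun r c : Fin (n + 1 - k) =>
            ent Yg (if r.val = 0 then k else k + r.val) (1 + c.val))).det
      from RingHom.map_det _ _]
    rw [show ((MvPolynomial.aeval val).toRingHom).mapMatrix
          (Matrix.of fun r c : Fin (n + 1 - k) =>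
            ent Yg (if r.val = 0 then k else k + r.val) (1 + c.val))
        = (1 : Matrix (Fin (n + 1 - k)) (Fin (n + 1 - k)) K) from ?_, Matrix.det_one]
    ext r c
    rw [RingHom.mapMatrix_apply, Matrix.map_apply]
    have hrlt : r.val < n + 1 - k := r.isLt
    have hclt : c.val < n + 1 - k := c.isLt
    have hrow : (if r.val = 0 then k else k + r.val) = k + r.val := by split <;> omega
    show MvPolynomial.aeval val (ent Yg (if r.val = 0 then k else k + r.val) (1 + c.val)) = _
    rw [hrow, hYval (k + r.val) (1 + c.val) (by omega) (by omega) (by omega) (by omega),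
      MvPolynomial.aeval_X, Matrix.one_apply]
    show (if (k + r.val - 1) = k - 1 + (1 + c.val - 1) then (1:K) else 0) = _
    by_cases hrc : r = c
    · have hv : r.val = c.val := by rw [hrc]
      rw [if_pos (by omega), if_pos hrc]
    · have hv : r.val ≠ c.val := fun h => hrc (Fin.ext h)
      rw [if_neg (by omega), if_neg hrc]
  -- assembling
  refine ⟨C * Nmin k k Yg,
    g * Nmin k k Yg + ∑ j ∈ Finset.Icc (n + 1 - i) (k - 1), Mmin i j Xg * Nmin j k Yg,
    ?_, ?_, ?_, ?_⟩
  · intro h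
    have : MvPolynomial.aeval val (C * Nmin k k Yg) = 0 := by rw [h, map_zero]
    rw [_root_.map_mul, hN1, mul_one] at this
    exact hC0 this
  · rw [hsum, hMik]
    show _ = C * Nmin k k Yg * xik + _
    ring
  · intro v hv
    have hmem : C * Nmin k k Yg ∈ S := mul_mem hCmem (hNmem k)
    rw [hS, MvPolynomial.mem_supported] at hmem
    exact hmem hv
  · intro v hv
    have hmem : g * Nmin k k Yg
        + ∑ j ∈ Finset.Icc (n + 1 - i) (k - 1), Mmin i j Xg * Nmin j k Yg ∈ S := by
      refine add_mem (mul_mem hgmem (hNmem k)) (Subalgebra.sum_mem _ fun j hj => ?_)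
      have hjk : j < k := by
        have := (Finset.mem_Icc.1 hj).2
        omega
      exact mul_mem (hMmem j hjk) (hNmem j)
    rw [hS, MvPolynomial.mem_supported] at hmem
    exact hmem hv
end

section
/- For all X, Y ∈ Mat(n,K), all g₁, g₂, g₃ ∈ UT(n), and every pair (i,k) with i' < k, one has R⁻_{ik}(g₁ X g₂⁻¹, g₃ Y g₂⁻¹) = R⁻_{ik}(X,Y). -/
open Matrix

section Aux

lemma ent_eq_s7 {R : Type*} [Zero R] {n : ℕ} (X : Matrix (Fin n) (Fin n) R) {a b : ℕ}
    (ha1 : 1 ≤ a) (ha2 : a ≤ n) (hb1 : 1 ≤ b) (hb2 : b ≤ n) :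
    ent X a b = X ⟨a - 1, by omega⟩ ⟨b - 1, by omega⟩ := by
  unfold ent
  rw [dif_pos ⟨ha1, ha2, hb1, hb2⟩]

lemma ent_eq_zero {R : Type*} [Zero R] {n : ℕ} (X : Matrix (Fin n) (Fin n) R) {a b : ℕ}
    (h : ¬(1 ≤ a ∧ a ≤ n ∧ 1 ≤ b ∧ b ≤ n)) : ent X a b = 0 := by
  unfold ent
  rw [dif_neg h]

lemma sum_fin_reindex {M : Type*} [AddCommMonoid M] {n m : ℕ} (e : Fin m → Fin n)
    (he : Function.Injective e) (f : Fin n → M)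
    (hf : ∀ t : Fin n, (∀ s, e s ≠ t) → f t = 0) :
    ∑ t : Fin n, f t = ∑ s : Fin m, f (e s) := by
  classical
  have h := Finset.sum_map Finset.univ ⟨e, he⟩ f
  simp only [Function.Embedding.coeFn_mk] at h
  rw [← h]
  symm
  apply Finset.sum_subset (Finset.subset_univ _)
  intro t _ ht
  exact hf t fun s hs => ht (Finset.mem_map.mpr ⟨s, Finset.mem_univ _, hs⟩)

lemma mk_congr {R : Type*} {n : ℕ} (X : Matrix (Fin n) (Fin n) R) {a b a' b' : ℕ}
    {ha : a < n} {hb : b < n} {ha' : a' < n} {hb' : b' < n}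
    (h1 : a = a') (h2 : b = b') : X ⟨a, ha⟩ ⟨b, hb⟩ = X ⟨a', ha'⟩ ⟨b', hb'⟩ := by
  subst h1; subst h2; rfl

lemma IsUT.det_one {R : Type*} [CommRing R] {n : ℕ} {u : Matrix (Fin n) (Fin n) R}
    (h : IsUT u) : u.det = 1 := by
  rw [Matrix.det_of_upperTriangular (fun a b hab => h.2 a b hab)]
  simp [h.1]

lemma Rminus_mul_right {K : Type*} [Field K] {n : ℕ}
    (X Y u : Matrix (Fin n) (Fin n) K) (hu : IsUT u)
    (i k : ℕ) (hk : k ≤ n) :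
    Rminus i k (X * u) (Y * u) = Rminus i k X Y := by
  unfold Rminus
  have hent : ∀ (A : Matrix (Fin n) (Fin n) K) (a : ℕ) (c : Fin k),
      ent (A * u) a (1 + c.val) =
      ∑ s : Fin k, ent A a (1 + s.val) * u (Fin.castLE hk s) (Fin.castLE hk c) := by
    intro A a c
    have hc1 : (1:ℕ) ≤ 1 + c.val := by omega
    have hc2 : 1 + c.val ≤ n := by have := c.isLt; omega
    by_cases ha : 1 ≤ a ∧ a ≤ n
    · rw [ent_eq_s7 _ ha.1 ha.2 hc1 hc2, Matrix.mul_apply]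
      rw [sum_fin_reindex (Fin.castLE hk) (Fin.castLE_injective hk)
        (fun t => A ⟨a - 1, by omega⟩ t * u t ⟨1 + c.val - 1, by omega⟩)
        (by
          intro t ht
          have h1 : k ≤ t.val := by
            by_contra h
            exact ht ⟨t.val, by omega⟩ (Fin.ext rfl)
          exact mul_eq_zero_of_right _ (hu.2 t ⟨1 + c.val - 1, by omega⟩ (by simp; omega)))]
      apply Finset.sum_congr rfl
      intro s _
      rw [ent_eq_s7 (a := a) (b := 1 + s.val) _ ha.1 ha.2 (by omega) (by have := s.isLt; omega)]
      congr 1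
      · apply mk_congr <;> omega
      · apply mk_congr <;> omega
    · rw [ent_eq_zero _ (by tauto)]
      symm
      apply Finset.sum_eq_zero
      intro s _
      rw [ent_eq_zero _ (by tauto), zero_mul]
  have key : (Matrix.of fun r c : Fin k =>
      if r.val < n + 1 - i then ent (X * u) (i + r.val) (1 + c.val)
      else ent (Y * u) (n - k + 1 + r.val) (1 + c.val))
      = (Matrix.of fun r c : Fin k =>
          if r.val < n + 1 - i then ent X (i + r.val) (1 + c.val)
          else ent Y (n - k + 1 + r.val) (1 + c.val))
        * (Matrix.of fun s c : Fin k => u (Fin.castLE hk s) (Fin.castLE hk c)) := by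
    ext r c
    rw [Matrix.mul_apply]
    simp only [Matrix.of_apply]
    by_cases hr : r.val < n + 1 - i
    · simp only [if_pos hr]
      rw [hent]
    · simp only [if_neg hr]
      rw [hent]
  rw [key, Matrix.det_mul]
  have hB : (Matrix.of fun s c : Fin k => u (Fin.castLE hk s) (Fin.castLE hk c)).det = 1 := by
    rw [Matrix.det_of_upperTriangular (fun a b hab => by
      simp only [Matrix.of_apply]
      exact hu.2 _ _ (by simpa using hab))]
    simp [hu.1]
  rw [hB, mul_one]

lemma Rminus_mul_left {K : Type*} [Field K] {n : ℕ}
    (X Y g₁ g₃ : Matrix (Fin n) (Fin n) K)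
    (h₁ : IsUT g₁) (h₃ : IsUT g₃) (i k : ℕ) (hi1 : 1 ≤ i) (hi2 : i ≤ n)
    (hk : k ≤ n) (hik : n + 1 - i ≤ k) :
    Rminus i k (g₁ * X) (g₃ * Y) = Rminus i k X Y := by
  unfold Rminus
  set L : Matrix (Fin k) (Fin k) K := Matrix.of fun r s : Fin k =>
    if r.val < n + 1 - i then
      (if s.val < n + 1 - i then ent g₁ (i + r.val) (i + s.val) else 0)
    else (if s.val < n + 1 - i then 0
      else ent g₃ (n - k + 1 + r.val) (n - k + 1 + s.val)) with hL
  have key : (Matrix.of fun r c : Fin k =>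
      if r.val < n + 1 - i then ent (g₁ * X) (i + r.val) (1 + c.val)
      else ent (g₃ * Y) (n - k + 1 + r.val) (1 + c.val))
      = L * (Matrix.of fun r c : Fin k =>
          if r.val < n + 1 - i then ent X (i + r.val) (1 + c.val)
          else ent Y (n - k + 1 + r.val) (1 + c.val)) := by
    ext r c
    rw [Matrix.mul_apply]
    simp only [hL, Matrix.of_apply]
    have hc1 : (1:ℕ) ≤ 1 + c.val := by omega
    have hc2 : 1 + c.val ≤ n := by have := c.isLt; omega
    by_cases hr : r.val < n + 1 - i
    · simp only [if_pos hr]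
      have hr2 : i + r.val ≤ n := by omega
      rw [ent_eq_s7 _ (by omega) hr2 hc1 hc2, Matrix.mul_apply]
      rw [sum_fin_reindex (fun σ : Fin (n + 1 - i) => (⟨i - 1 + σ.val, by omega⟩ : Fin n))
        (fun a b hab => by
          have hv : i - 1 + a.val = i - 1 + b.val := congrArg Fin.val hab
          exact Fin.ext (by omega))
        (fun t => g₁ ⟨i + r.val - 1, by omega⟩ t * X t ⟨1 + c.val - 1, by omega⟩)
        (by
          intro t ht
          have h1 : t.val < i - 1 := by
            by_contra h
            push_neg at h
            exact ht ⟨t.val - (i - 1), by omega⟩ (Fin.ext (by simp; omega))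
          exact mul_eq_zero_of_left (h₁.2 ⟨i + r.val - 1, by omega⟩ t (by simp; omega)) _)]
      rw [sum_fin_reindex (Fin.castLE hik) (Fin.castLE_injective hik)
        (fun s => (if s.val < n + 1 - i then ent g₁ (i + r.val) (i + s.val) else 0) *
          (if s.val < n + 1 - i then ent X (i + s.val) (1 + c.val)
            else ent Y (n - k + 1 + s.val) (1 + c.val)))
        (by
          intro s hs
          have h1 : n + 1 - i ≤ s.val := by
            by_contra h
            exact hs ⟨s.val, by omega⟩ (Fin.ext rfl)
          exact mul_eq_zero_of_left (by rw [if_neg (by omega)]) _)]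
      apply Finset.sum_congr rfl
      intro σ _
      have hσ : σ.val < n + 1 - i := by simpa using σ.isLt
      simp only [Fin.castLE, if_pos hσ]
      rw [ent_eq_s7 (a := i + r.val) (b := i + σ.val) _ (by omega) (by omega) (by omega) (by omega),
        ent_eq_s7 (a := i + σ.val) _ (by omega) (by omega) hc1 hc2]
      congr 1
      · apply mk_congr <;> omega
      · apply mk_congr <;> omega
    · simp only [if_neg hr]
      have hrk := r.isLt
      rw [ent_eq_s7 (a := n - k + 1 + r.val) _ (by omega) (by omega) hc1 hc2, Matrix.mul_apply]
      rw [sum_fin_reindex (fun σ : Fin k => (⟨n - k + σ.val, by omega⟩ : Fin n))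
        (fun a b hab => by
          have hv : n - k + a.val = n - k + b.val := congrArg Fin.val hab
          exact Fin.ext (by omega))
        (fun t => g₃ ⟨n - k + 1 + r.val - 1, by omega⟩ t * Y t ⟨1 + c.val - 1, by omega⟩)
        (by
          intro t ht
          have h1 : t.val < n - k := by
            by_contra h
            push_neg at h
            exact ht ⟨t.val - (n - k), by omega⟩ (Fin.ext (by simp; omega))
          exact mul_eq_zero_of_left (h₃.2 ⟨n - k + 1 + r.val - 1, by omega⟩ t (by simp; omega)) _)]
      apply Finset.sum_congr rfl
      intro s _
      have hsk := s.isLt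
      by_cases hs : s.val < n + 1 - i
      · rw [if_pos hs, zero_mul]
        rw [h₃.2 ⟨n - k + 1 + r.val - 1, by omega⟩ ⟨n - k + s.val, by omega⟩ (by simp; omega),
          zero_mul]
      · simp only [if_neg hs]
        rw [ent_eq_s7 (a := n - k + 1 + r.val) (b := n - k + 1 + s.val) _
            (by omega) (by omega) (by omega) (by omega),
          ent_eq_s7 (a := n - k + 1 + s.val) _ (by omega) (by omega) hc1 hc2]
        congr 1
        · apply mk_congr <;> omega
        · apply mk_congr <;> omega
  rw [key, Matrix.det_mul]
  have hLdet : L.det = 1 := by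
    rw [Matrix.det_of_upperTriangular (fun a b hab => by
      simp only [hL, Matrix.of_apply]
      have hab' : b.val < a.val := hab
      by_cases ha : a.val < n + 1 - i
      · rw [if_pos ha, if_pos (by omega)]
        rw [ent_eq_s7 (a := i + a.val) (b := i + b.val) _ (by omega) (by omega) (by omega) (by omega)]
        exact h₁.2 _ _ (by simp; omega)
      · rw [if_neg ha]
        by_cases hb : b.val < n + 1 - i
        · rw [if_pos hb]
        · rw [if_neg hb]
          have := a.isLt
          rw [ent_eq_s7 (a := n - k + 1 + a.val) (b := n - k + 1 + b.val) _
            (by omega) (by omega) (by omega) (by omega)]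
          exact h₃.2 _ _ (by simp; omega))]
    have hdiag : ∀ r : Fin k, L r r = 1 := by
      intro r
      simp only [hL, Matrix.of_apply]
      have := r.isLt
      by_cases hr : r.val < n + 1 - i
      · rw [if_pos hr, if_pos hr,
          ent_eq_s7 (a := i + r.val) (b := i + r.val) _ (by omega) (by omega) (by omega) (by omega)]
        exact h₁.1 _
      · rw [if_neg hr, if_neg hr,
          ent_eq_s7 (a := n - k + 1 + r.val) (b := n - k + 1 + r.val) _
            (by omega) (by omega) (by omega) (by omega)]
        exact h₃.1 _
    simp [hdiag]
  rw [hLdet, one_mul]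

end Aux

/-- the polynomials `R⁻_{ik}` are `U`-invariants:
`R⁻_{ik}(g₁ X g₂⁻¹, g₃ Y g₂⁻¹) = R⁻_{ik}(X, Y)` for unitriangular `g₁, g₂, g₃`
and every pair `(i,k)` with `i' = n - i + 1 < k`. -/
theorem Rminus_unitriangular_invariant {K : Type*} [Field K] {n : ℕ} (hn : 1 ≤ n)
    (X Y g₁ g₂ g₃ : Matrix (Fin n) (Fin n) K)
    (h₁ : IsUT g₁) (h₂ : IsUT g₂) (h₃ : IsUT g₃)
    (i k : ℕ) (hi1 : 1 ≤ i) (hi2 : i ≤ n) (hk : k ≤ n) (hik : n + 1 - i < k) :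
    Rminus i k (g₁ * X * g₂⁻¹) (g₃ * Y * g₂⁻¹) = Rminus i k X Y := by
  have hdet2 : IsUnit g₂.det := by rw [h₂.det_one]; exact isUnit_one
  have e1 : g₁ * X * g₂⁻¹ * g₂ = g₁ * X := by
    rw [Matrix.mul_assoc, Matrix.nonsing_inv_mul g₂ hdet2, Matrix.mul_one]
  have e3 : g₃ * Y * g₂⁻¹ * g₂ = g₃ * Y := by
    rw [Matrix.mul_assoc, Matrix.nonsing_inv_mul g₂ hdet2, Matrix.mul_one]
  calc Rminus i k (g₁ * X * g₂⁻¹) (g₃ * Y * g₂⁻¹)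
      = Rminus i k (g₁ * X * g₂⁻¹ * g₂) (g₃ * Y * g₂⁻¹ * g₂) :=
        (Rminus_mul_right _ _ _ h₂ i k hk).symm
    _ = Rminus i k (g₁ * X) (g₃ * Y) := by rw [e1, e3]
    _ = Rminus i k X Y := Rminus_mul_left _ _ _ _ h₁ h₃ i k hi1 hi2 hk (le_of_lt hik)
end

section
/- Fix (i,k) with i' < k. There is a sign ε ∈ {+1,−1}, depending only on n, i, k, such that for every X ∈ Mat(n,K) and every upper anti-triangular matrix S⁺ (entries at positions (a,b) with a+b > n+1 are zero), R⁻_{ik}(X, S⁺) = ε · M_I^J(X) · D_{k'+i'}(S⁺), where M_I^J(X) is the minor of X with rows I = {i,…,n} and columns J = {k−i'+1,…,k}, and k' = n−k+1. -/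
open Matrix

/-- for an upper anti-triangular matrix `S⁺`, `R⁻_{ik}(X, S⁺)` factors as
`± M_I^J(X) · D_{k'+i'}(S⁺)`, where `I = {i,…,n}`, `J = {k-i'+1,…,k}`, `i' = n-i+1`,
`k' = n-k+1`, and the sign depends only on `n, i, k`. -/
theorem Rminus_upperAnti {K : Type*} [Field K] {n : ℕ} (hn : 1 ≤ n)
    (i k : ℕ) (hi1 : 1 ≤ i) (hi2 : i ≤ n) (hk : k ≤ n) (hik : n + 1 - i < k) :
    ∃ ε : K, (ε = 1 ∨ ε = -1) ∧
      ∀ X S : Matrix (Fin n) (Fin n) K, UpperAnti S →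
        Rminus i k X S
          = ε * RectMinor i (k - (n + 1 - i) + 1) (n + 1 - i) X
              * Dmin ((n + 1 - k) + (n + 1 - i)) S := by
  set p := n + 1 - i with hp
  set q := k - p with hq
  have hppos : 1 ≤ p := by omega
  have hqpos : 1 ≤ q := by omega
  have hpq : p + q = k := by omega
  have hqp : q + p = k := by omega
  let e : Fin k ≃ Fin p ⊕ Fin q := (finCongr hpq.symm).trans finSumFinEquiv.symm
  let e' : Fin k ≃ Fin p ⊕ Fin q :=
    ((finCongr hqp.symm).trans finSumFinEquiv.symm).trans (Equiv.sumComm (Fin q) (Fin p))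
  let ρ : Equiv.Perm (Fin k) := e.trans e'.symm
  refine ⟨(((Equiv.Perm.sign ρ : ℤˣ) : ℤ) : K), ?_, ?_⟩
  · rcases Int.units_eq_one_or (Equiv.Perm.sign ρ) with h | h <;> simp [h]
  intro X S hS
  set A : Matrix (Fin p) (Fin q) K := fun r c => ent X (i + r.val) (1 + c.val) with hA
  set B : Matrix (Fin p) (Fin p) K := fun r c => ent X (i + r.val) (1 + q + c.val) with hB
  set C : Matrix (Fin q) (Fin q) K :=
    fun r c => ent S (n - k + 1 + p + r.val) (1 + c.val) with hC
  have he : ∀ (r : Fin k) (h : r.val < p), e r = Sum.inl ⟨r.val, h⟩ := by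
    intro r h
    have h1 : (finCongr hpq.symm) r = finSumFinEquiv (Sum.inl (⟨r.val, h⟩ : Fin p)) := by
      ext; simp
    show finSumFinEquiv.symm ((finCongr hpq.symm) r) = _
    rw [h1, Equiv.symm_apply_apply]
  have he2 : ∀ (r : Fin k) (h : ¬ r.val < p), e r = Sum.inr ⟨r.val - p, by omega⟩ := by
    intro r h
    have h1 : (finCongr hpq.symm) r
        = finSumFinEquiv (Sum.inr (⟨r.val - p, by omega⟩ : Fin q)) := by
      ext; simp; omega
    show finSumFinEquiv.symm ((finCongr hpq.symm) r) = _
    rw [h1, Equiv.symm_apply_apply]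
  have he' : ∀ (c : Fin k) (h : c.val < q), e' c = Sum.inr ⟨c.val, h⟩ := by
    intro c h
    have h1 : (finCongr hqp.symm) c = finSumFinEquiv (Sum.inl (⟨c.val, h⟩ : Fin q)) := by
      ext; simp
    show (Equiv.sumComm (Fin q) (Fin p)) (finSumFinEquiv.symm ((finCongr hqp.symm) c)) = _
    rw [h1, Equiv.symm_apply_apply]
    rfl
  have he'2 : ∀ (c : Fin k) (h : ¬ c.val < q), e' c = Sum.inl ⟨c.val - q, by omega⟩ := by
    intro c h
    have h1 : (finCongr hqp.symm) c
        = finSumFinEquiv (Sum.inr (⟨c.val - q, by omega⟩ : Fin p)) := by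
      ext; simp; omega
    show (Equiv.sumComm (Fin q) (Fin p)) (finSumFinEquiv.symm ((finCongr hqp.symm) c)) = _
    rw [h1, Equiv.symm_apply_apply]
    rfl
  have key : (Matrix.of fun r c : Fin k =>
      if r.val < n + 1 - i then ent X (i + r.val) (1 + c.val)
      else ent S (n - k + 1 + r.val) (1 + c.val))
      = ((fromBlocks B A 0 C).submatrix e' e').submatrix ρ id := by
    ext r c
    show _ = (fromBlocks B A 0 C) (e' (e'.symm (e r))) (e' c)
    rw [Equiv.apply_symm_apply]
    by_cases hr : r.val < p
    · rw [he r hr]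
      by_cases hc : c.val < q
      · rw [he' c hc]
        simp only [Matrix.of_apply, fromBlocks_apply₁₂, if_pos (show r.val < n + 1 - i from hr)]
        rfl
      · rw [he'2 c hc]
        simp only [Matrix.of_apply, fromBlocks_apply₁₁, if_pos (show r.val < n + 1 - i from hr),
          hB]
        congr 1
        simp only [Fin.val_mk]
        omega
    · rw [he2 r hr]
      by_cases hc : c.val < q
      · rw [he' c hc]
        simp only [Matrix.of_apply, fromBlocks_apply₂₂, if_neg (show ¬ r.val < n + 1 - i from hr),
          hC]
        congr 1
        simp only [Fin.val_mk]
        omega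
      · rw [he'2 c hc]
        simp only [Matrix.of_apply, fromBlocks_apply₂₁, Matrix.zero_apply,
          if_neg (show ¬ r.val < n + 1 - i from hr)]
        have h1 : 1 ≤ n - k + 1 + r.val ∧ n - k + 1 + r.val ≤ n ∧ 1 ≤ 1 + c.val ∧
            1 + c.val ≤ n := by
          refine ⟨by omega, by omega, by omega, by omega⟩
        rw [ent, dif_pos h1]
        apply hS
        simp
        omega
  have hBdet : B.det = RectMinor i (k - (n + 1 - i) + 1) (n + 1 - i) X := by
    have hq1 : k - (n + 1 - i) + 1 = q + 1 := by omega
    rw [RectMinor, hq1]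
    congr 1
    ext r c
    simp only [Matrix.of_apply, hB]
    congr 1
    omega
  have hm : q = n + 1 - ((n + 1 - k) + (n + 1 - i)) := by omega
  have hCdet : C.det = Dmin ((n + 1 - k) + (n + 1 - i)) S := by
    rw [Dmin, ← Matrix.det_submatrix_equiv_self (finCongr hm)]
    congr 1
    ext r c
    simp only [Matrix.submatrix_apply, Matrix.of_apply, finCongr_apply, Fin.coe_cast, hC]
    congr 1
    omega
  rw [Rminus, key, Matrix.det_permute, Matrix.det_submatrix_equiv_self,
    Matrix.det_fromBlocks_zero₂₁, hBdet, hCdet]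
  push_cast
  ring
end
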